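/- Assume G is abelian, and let H ⊊ K be closed subgroups of G with K ≠ G. For all positive integers i and j: (a) the number of forests in 𝓕(i+j, G, V) having exactly two connected components, whose subforest decomposition consists of one K-tree with i leaves and one H-tree with j leaves, equals binom(i+j, i)·λ_{K,i}·λ_{H,j}; (b) the number of forests in 𝓕(i+j−1, G, V) consisting of a single tree whose subforest decomposition consists of one K-tree with i leaves and one H-tree with j leaves (the root of the H-tree glued to a leaf of the K-tree) equals binom(i+j−1, j)·λ_{K,i}·λ_{H,j}. -/
import Mathlib

variable {G : Type*} [CommGroup G] {V : Type*} [AddCommGroup V] [Module ℂ V]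

/-- The subspace `Fix(H)` of vectors fixed by every element of the subgroup `H`
under the representation `ρ`. -/
def fixedSpace (ρ : Representation ℂ G V) (H : Subgroup G) : Submodule ℂ V where
  carrier := {v | ∀ h ∈ H, ρ h v = v}
  add_mem' := by
    intro a b ha hb h hh
    rw [map_add, ha h hh, hb h hh]
  zero_mem' := by
    intro h hh
    exact map_zero _
  smul_mem' := by
    intro c a ha h hh
    rw [map_smul, ha h hh]

/-- A subgroup `H ≤ G` is closed (w.r.t. `ρ`) if every subgroup `K` with `H ≤ K`
and `Fix(K) = Fix(H)` satisfies `K = H`. -/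
def IsClosedSubgroup (ρ : Representation ℂ G V) (H : Subgroup G) : Prop :=
  ∀ K : Subgroup G, H ≤ K → fixedSpace ρ K = fixedSpace ρ H → K = H

open scoped Pointwise

/-- A vertex of a labelled forest on the leaf set `{1,…,n}` (encoded as `Fin n`):
`leaves` is the set of leaves of the forest lying below the vertex, `label` is the
subgroup labelling the vertex, and, for a leaf `l` below the vertex, `coset l` is
the coset `g_l K` obtained by composing the edge labels on the path from the
vertex down to the leaf `l` (as in the paper, if the path carries, from the top,
the coset labels `a₁K, a₂K₂, …, a_lK_l`, then `coset l = a_l ⋯ a₂ a₁ K`); on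
leaves not below the vertex, `coset` is `∅`.  Within the forests considered below
a vertex is uniquely determined by this data, and conversely the single-edge
labels are recovered from it, so this encoding is faithful. -/
structure FVertex (n : ℕ) (G : Type*) [Group G] where
  leaves : Finset (Fin n)
  label : Subgroup G
  coset : Fin n → Set G

/-- `[P] ≤ [Q]` for conjugacy classes of subgroups: some `G`-conjugate of `P` is
contained in `Q`. -/
def ConjLE {G : Type*} [Group G] (P Q : Subgroup G) : Prop :=
  ∃ a : G, P.map (MulAut.conj a).toMonoidHom ≤ Q

/-- `[P] ≨ [Q]` (strictly). -/
def ConjLT {G : Type*} [Group G] (P Q : Subgroup G) : Prop :=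
  ConjLE P Q ∧ ¬ ConjLE Q P

/-- `v` lies strictly below `w` in the forest: either the leaf set of `v` is
strictly smaller, or the leaf sets agree and the vertices lie on a common chain
of unique-child vertices, ordered by their labels. -/
def FVertex.below {n : ℕ} {G : Type*} [Group G] (v w : FVertex n G) : Prop :=
  v.leaves ⊂ w.leaves ∨ (v.leaves = w.leaves ∧ ConjLT v.label w.label)

/-- `w` is a direct descendant (child) of `v` in the forest `F`. -/
def IsDirectChild {n : ℕ} {G : Type*} [Group G] (F : Set (FVertex n G))
    (w v : FVertex n G) : Prop :=
  w.below v ∧ ¬ ∃ u ∈ F, w.below u ∧ u.below v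

/-- The forests of the family 𝓕(n,G,V): rooted oriented forests with leaves
labelled bijectively by `{1,…,n}` (isolated "fallen" leaves are allowed and are
implicit: they are the leaves lying below no vertex), at least one internal
vertex, internal vertices labelled by closed subgroups of `G`, and edges labelled
by cosets, subject to conditions (1)-(5) of the paper.  A forest is encoded by
its set of internal vertices, each vertex carrying its leaf set, its subgroup
label and the composed coset data of the paths towards its leaves. -/
def IsFGForest {n : ℕ} (ρ : Representation ℂ G V) (F : Set (FVertex n G)) : Prop :=
  -- a finite forest with at least one internal vertex
  F.Finite ∧ F.Nonempty ∧
  -- every internal vertex has at least one leaf below it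
  (∀ v ∈ F, v.leaves.Nonempty) ∧
  -- internal vertices are labelled by closed subgroups
  (∀ v ∈ F, IsClosedSubgroup ρ v.label) ∧
  -- the leaf sets form a laminar family (forest structure)
  (∀ v ∈ F, ∀ w ∈ F, (v.leaves ∩ w.leaves).Nonempty →
      v.leaves ⊆ w.leaves ∨ w.leaves ⊆ v.leaves) ∧
  -- (1) if an internal vertex labelled P descends from one labelled Q, then [P] ≤ [Q]
  (∀ v ∈ F, ∀ w ∈ F, w.leaves ⊂ v.leaves → ConjLE w.label v.label) ∧
  -- (1)&(2) vertices with the same leaf set form a chain of unique children with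
  -- strictly increasing labels (in particular a unique internal child has
  -- strictly smaller label class)
  (∀ v ∈ F, ∀ w ∈ F, v ≠ w → v.leaves = w.leaves →
      ConjLT v.label w.label ∨ ConjLT w.label v.label) ∧
  -- (2) if a leaf is the unique child of a vertex, its label is not {e}
  (∀ v ∈ F, ∀ l : Fin n, v.leaves = {l} →
      (¬ ∃ w ∈ F, w ≠ v ∧ w.leaves = v.leaves ∧ ConjLT w.label v.label) →
      v.label ≠ ⊥) ∧
  -- (3) the label G appears in at most one tree, and a vertex labelled G has at
  -- most one direct descendant labelled G: the G-labelled vertices are pairwise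
  -- comparable
  (∀ v ∈ F, ∀ w ∈ F, v.label = ⊤ → w.label = ⊤ → v = w ∨ v.below w ∨ w.below v) ∧
  -- (4) the (composed) coset data consists of left cosets of the vertex label …
  (∀ v ∈ F, ∀ l ∈ v.leaves, ∃ a : G, v.coset l = a • (v.label : Set G)) ∧
  (∀ v ∈ F, ∀ l : Fin n, l ∉ v.leaves → v.coset l = ∅) ∧
  -- … and is compatible along edges: the edge from `v` (labelled Q) to a direct
  -- child `w` (labelled P) carries a coset label aQ with a⁻¹Pa ⊆ Q, and (by (5))
  -- the edge towards the child subtree containing the smallest leaf carries eQ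
  (∀ v ∈ F, ∀ w ∈ F, IsDirectChild F w v →
      ∃ a : G, (w.label.map (MulAut.conj a⁻¹).toMonoidHom ≤ v.label) ∧
        (∀ l ∈ w.leaves, v.coset l = w.coset l * (a • (v.label : Set G))) ∧
        (∀ hv : v.leaves.Nonempty, v.leaves.min' hv ∈ w.leaves → a ∈ v.label)) ∧
  -- (5) the composed coset towards the smallest leaf below a vertex is eK
  (∀ v ∈ F, ∀ hv : v.leaves.Nonempty, v.coset (v.leaves.min' hv) = (v.label : Set G))

/-- The set of roots (maximal vertices) of the forest `F`: each corresponds to a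
tree of `F`. -/
def rootsOf {n : ℕ} {G : Type*} [Group G] (F : Set (FVertex n G)) :
    Set (FVertex n G) :=
  {v | v ∈ F ∧ ∀ w ∈ F, ¬ v.below w}

open Classical in
/-- The fallen leaves of `F`: the leaves lying below no internal vertex. -/
noncomputable def fallenLeaves {n : ℕ} {G : Type*} [Group G]
    (F : Set (FVertex n G)) : Finset (Fin n) :=
  Finset.univ.filter fun l => ∀ v ∈ F, l ∉ v.leaves

/-- The number of connected components of `F` (trees and fallen leaves each count
as one component). -/
noncomputable def components {n : ℕ} {G : Type*} [Group G]
    (F : Set (FVertex n G)) : ℕ :=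
  (rootsOf F).ncard + (fallenLeaves F).card

open Classical in
/-- The number of leaves of `F` attached to `H`-labelled vertices, i.e. whose
parent (the minimal internal vertex above them) is labelled `H`. -/
noncomputable def attachedCount {n : ℕ} {G : Type*} [Group G]
    (F : Set (FVertex n G)) (H : Subgroup G) : ℕ :=
  (Finset.univ.filter fun l : Fin n => ∃ v ∈ F, l ∈ v.leaves ∧ v.label = H ∧
    ∀ w ∈ F, l ∈ w.leaves → (v = w ∨ v.below w)).card

/-- An `H`-tree on the leaf set `{1,…,m}`: a single rooted oriented tree, with
leaves bijectively labelled by `{1,…,m}`, all of whose internal vertices are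
labelled by the (closed) subgroup `H`, with edges labelled by cosets of `H`,
normalized as in (5); every internal vertex has at least two children or a single
child which is a leaf (the latter only if `H ≠ {e}`). -/
def IsHTree {m : ℕ} (ρ : Representation ℂ G V) (H : Subgroup G)
    (F : Set (FVertex m G)) : Prop :=
  IsFGForest ρ F ∧ (∀ v ∈ F, v.label = H) ∧ ∃ v ∈ F, v.leaves = Finset.univ

/-- `λ_{H,i}`: the number of `H`-trees on the leaf set `{1,…,i}`. -/
noncomputable def lamHT (ρ : Representation ℂ G V) (H : Subgroup G) (i : ℕ) : ℕ :=
  Nat.card {F : Set (FVertex i G) // IsHTree ρ H F}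

/-!
STATEMENT 12 (G abelian, H ⊊ K closed subgroups, K ≠ G, i, j ≥ 1):
(a) the number of forests in 𝓕(i+j,G,V) with exactly two connected components,
whose subforest decomposition consists of one K-tree with i leaves and one H-tree
with j leaves, is binom(i+j,i)·λ_{K,i}·λ_{H,j};
(b) the number of forests in 𝓕(i+j−1,G,V) consisting of a single tree whose
subforest decomposition consists of one K-tree with i leaves and one H-tree with
j leaves (the root of the H-tree glued to a leaf of the K-tree) is
binom(i+j−1,j)·λ_{K,i}·λ_{H,j}.
-/
section KHBasic
variable {G : Type*} [CommGroup G]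

theorem KH.conj_eq (a : G) : (MulAut.conj a).toMonoidHom = MonoidHom.id G := by
  ext x; simp [mul_comm]

theorem KH.map_conj (a : G) (P : Subgroup G) :
    P.map (MulAut.conj a).toMonoidHom = P := by
  rw [KH.conj_eq, Subgroup.map_id]

theorem KH.conjLE_iff {P Q : Subgroup G} : ConjLE P Q ↔ P ≤ Q := by
  constructor
  · rintro ⟨a, h⟩; rwa [KH.map_conj] at h
  · intro h; exact ⟨1, by rwa [KH.map_conj]⟩

theorem KH.conjLT_iff {P Q : Subgroup G} : ConjLT P Q ↔ P < Q := by
  simp [ConjLT, KH.conjLE_iff, lt_iff_le_not_ge]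

variable {n : ℕ}

theorem KH.below_iff {v w : FVertex n G} :
    v.below w ↔ v.leaves ⊂ w.leaves ∨ (v.leaves = w.leaves ∧ v.label < w.label) := by
  simp [FVertex.below, KH.conjLT_iff]

theorem KH.below_trans {u v w : FVertex n G} (h1 : u.below v) (h2 : v.below w) :
    u.below w := by
  rw [KH.below_iff] at *
  rcases h1 with h1 | ⟨e1, l1⟩ <;> rcases h2 with h2 | ⟨e2, l2⟩
  · exact Or.inl (h1.trans h2)
  · exact Or.inl (e2 ▸ h1)
  · exact Or.inl (e1 ▸ h2)
  · exact Or.inr ⟨e1.trans e2, l1.trans l2⟩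

theorem KH.below_irrefl (v : FVertex n G) : ¬ v.below v := by
  rw [KH.below_iff]; simp [ssubset_irrefl]

theorem KH.below_asymm {v w : FVertex n G} (h : v.below w) : ¬ w.below v :=
  fun h2 => KH.below_irrefl v (KH.below_trans h h2)

theorem KH.below_leaves_subset {v w : FVertex n G} (h : v.below w) :
    v.leaves ⊆ w.leaves := by
  rw [KH.below_iff] at h
  rcases h with h | ⟨e, _⟩
  · exact h.subset
  · exact e ▸ Finset.Subset.refl _

theorem KH.smul_coset_mul {H K : Subgroup G} (hHK : H ≤ K) (x y : G) :
    (x • (H : Set G)) * (y • (K : Set G)) = (x * y) • (K : Set G) := by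
  ext z
  simp only [Set.mem_mul, Set.mem_smul_set, SetLike.mem_coe, smul_eq_mul]
  constructor
  · rintro ⟨_, ⟨h, hh, rfl⟩, _, ⟨k, hk, rfl⟩, rfl⟩
    exact ⟨h * k, K.mul_mem (hHK hh) hk, by rw [mul_mul_mul_comm]⟩
  · rintro ⟨k, hk, rfl⟩
    exact ⟨x, ⟨1, H.one_mem, mul_one x⟩, y * k, ⟨k, hk, rfl⟩, by rw [← mul_assoc]⟩

theorem KH.coe_eq_one_smul (K : Subgroup G) : (K : Set G) = (1 : G) • (K : Set G) :=
  (one_smul _ _).symm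

theorem KH.coset_mul_coset (K : Subgroup G) (x y : G) :
    (x • (K : Set G)) * (y • (K : Set G)) = (x * y) • (K : Set G) :=
  KH.smul_coset_mul le_rfl x y

theorem KH.sub_coset_mul {H K : Subgroup G} (hHK : H ≤ K) (y : G) :
    ((H : Set G)) * (y • (K : Set G)) = y • (K : Set G) := by
  rw [KH.coe_eq_one_smul H, KH.smul_coset_mul hHK, one_mul]

end KHBasic
section KHPush
variable {G : Type*} [CommGroup G] {m n : ℕ}

/-- Push a vertex forward along an order embedding of leaf sets. -/
def KH.pushV (e : Fin m ↪o Fin n) (v : FVertex m G) : FVertex n G where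
  leaves := v.leaves.map e.toEmbedding
  label := v.label
  coset := fun l => ⋃ (k : Fin m) (_ : e k = l), v.coset k

@[simp] theorem KH.pushV_label (e : Fin m ↪o Fin n) (v : FVertex m G) :
    (KH.pushV e v).label = v.label := rfl

@[simp] theorem KH.pushV_leaves (e : Fin m ↪o Fin n) (v : FVertex m G) :
    (KH.pushV e v).leaves = v.leaves.map e.toEmbedding := rfl

theorem KH.mem_pushV_leaves {e : Fin m ↪o Fin n} {v : FVertex m G} {k : Fin m} :
    e k ∈ (KH.pushV e v).leaves ↔ k ∈ v.leaves := by
  simp only [KH.pushV_leaves, Finset.mem_map]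
  constructor
  · rintro ⟨x, hx, hxk⟩
    rwa [← e.injective hxk]
  · intro h; exact ⟨k, h, rfl⟩

@[simp] theorem KH.pushV_coset_apply (e : Fin m ↪o Fin n) (v : FVertex m G) (k : Fin m) :
    (KH.pushV e v).coset (e k) = v.coset k := by
  ext z
  simp only [KH.pushV, Set.mem_iUnion]
  constructor
  · rintro ⟨k', hk', hz⟩
    rwa [e.injective hk'] at hz
  · intro h; exact ⟨k, rfl, h⟩

theorem KH.pushV_coset_of_not_range {e : Fin m ↪o Fin n} {l : Fin n}
    (hl : ∀ k : Fin m, e k ≠ l) (v : FVertex m G) :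
    (KH.pushV e v).coset l = ∅ := by
  ext z
  simp only [KH.pushV, Set.mem_iUnion]
  simp only [Set.mem_empty_iff_false, iff_false]
  rintro ⟨k, hk, -⟩
  exact hl k hk

theorem KH.pushV_injective (e : Fin m ↪o Fin n) :
    Function.Injective (KH.pushV (G := G) e) := by
  intro v w h
  have hl : v.leaves = w.leaves :=
    Finset.map_injective e.toEmbedding (congrArg FVertex.leaves h)
  have hlab : v.label = w.label := congrArg (fun u : FVertex n G => u.label) h
  have hc : v.coset = w.coset := by
    funext k
    have := congrArg (fun u : FVertex n G => u.coset (e k)) h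
    simpa using this
  cases v; cases w
  simp_all

theorem KH.pushV_leaves_subset_iff {e : Fin m ↪o Fin n} {v w : FVertex m G} :
    (KH.pushV e v).leaves ⊆ (KH.pushV e w).leaves ↔ v.leaves ⊆ w.leaves := by
  simp [Finset.map_subset_map]

theorem KH.pushV_leaves_eq_iff {e : Fin m ↪o Fin n} {v w : FVertex m G} :
    (KH.pushV e v).leaves = (KH.pushV e w).leaves ↔ v.leaves = w.leaves := by
  constructor
  · intro h; exact Finset.map_injective e.toEmbedding h
  · intro h; simp [h]

theorem KH.pushV_leaves_ssubset_iff {e : Fin m ↪o Fin n} {v w : FVertex m G} :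
    (KH.pushV e v).leaves ⊂ (KH.pushV e w).leaves ↔ v.leaves ⊂ w.leaves := by
  rw [Finset.ssubset_iff_subset_ne, Finset.ssubset_iff_subset_ne,
    KH.pushV_leaves_subset_iff]
  simp only [ne_eq, KH.pushV_leaves_eq_iff]

theorem KH.pushV_below_iff {e : Fin m ↪o Fin n} {v w : FVertex m G} :
    (KH.pushV e v).below (KH.pushV e w) ↔ v.below w := by
  rw [KH.below_iff, KH.below_iff, KH.pushV_leaves_ssubset_iff, KH.pushV_leaves_eq_iff]
  simp

theorem KH.min'_map (e : Fin m ↪o Fin n) (s : Finset (Fin m)) (hs : s.Nonempty)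
    (hs' : (s.map e.toEmbedding).Nonempty) :
    (s.map e.toEmbedding).min' hs' = e (s.min' hs) := by
  apply le_antisymm
  · exact Finset.min'_le _ _ (Finset.mem_map_of_mem _ (s.min'_mem hs))
  · apply Finset.le_min'
    intro y hy
    rcases Finset.mem_map.mp hy with ⟨x, hx, rfl⟩
    exact e.le_iff_le.mpr (Finset.min'_le _ _ hx)

theorem KH.pushV_leaves_nonempty_iff {e : Fin m ↪o Fin n} {v : FVertex m G} :
    (KH.pushV e v).leaves.Nonempty ↔ v.leaves.Nonempty := by
  simp [Finset.map_nonempty]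

end KHPush
section KHTransport
variable {G : Type*} [CommGroup G] {VV : Type*} [AddCommGroup VV] [Module ℂ VV]
variable {m n : ℕ}

theorem KH.map_eq_singleton_iff {e : Fin m ↪o Fin n} {s : Finset (Fin m)} {l : Fin n} :
    s.map e.toEmbedding = {l} ↔ ∃ k, s = {k} ∧ e k = l := by
  constructor
  · intro h
    have hne : s.Nonempty := by
      rw [← Finset.map_nonempty (f := e.toEmbedding), h]
      exact Finset.singleton_nonempty l
    obtain ⟨k, hk⟩ := hne
    have hek : e k ∈ ({l} : Finset (Fin n)) := h ▸ Finset.mem_map_of_mem _ hk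
    rw [Finset.mem_singleton] at hek
    refine ⟨k, ?_, hek⟩
    apply Finset.eq_singleton_iff_unique_mem.mpr
    refine ⟨hk, fun x hx => ?_⟩
    have hex : e x ∈ ({l} : Finset (Fin n)) := h ▸ Finset.mem_map_of_mem _ hx
    rw [Finset.mem_singleton] at hex
    exact e.injective (by rw [hex, hek])
  · rintro ⟨k, rfl, rfl⟩
    simp

theorem KH.isDirectChild_push_iff {e : Fin m ↪o Fin n} {F : Set (FVertex m G)}
    {v w : FVertex m G} :
    IsDirectChild (KH.pushV e '' F) (KH.pushV e w) (KH.pushV e v) ↔ IsDirectChild F w v := by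
  unfold IsDirectChild
  rw [KH.pushV_below_iff]
  apply and_congr_right'
  rw [not_iff_not]
  constructor
  · rintro ⟨u, ⟨u', hu', rfl⟩, h1, h2⟩
    exact ⟨u', hu', KH.pushV_below_iff.mp h1, KH.pushV_below_iff.mp h2⟩
  · rintro ⟨u, hu, h1, h2⟩
    exact ⟨KH.pushV e u, ⟨u, hu, rfl⟩, KH.pushV_below_iff.mpr h1, KH.pushV_below_iff.mpr h2⟩


theorem KH.pushV_min'_eq (e : Fin m ↪o Fin n) (v : FVertex m G)
    (hv : v.leaves.Nonempty) (h' : (KH.pushV e v).leaves.Nonempty) :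
    (KH.pushV e v).leaves.min' h' = e (v.leaves.min' hv) :=
  KH.min'_map e _ hv h'

theorem KH.pushV_min'_mem_iff (e : Fin m ↪o Fin n) (v w : FVertex m G)
    (hv : v.leaves.Nonempty) (h' : (KH.pushV e v).leaves.Nonempty) :
    (KH.pushV e v).leaves.min' h' ∈ (KH.pushV e w).leaves ↔
      v.leaves.min' hv ∈ w.leaves := by
  rw [KH.pushV_min'_eq e v hv h']
  exact KH.mem_pushV_leaves

theorem KH.pushV_coset_min' (e : Fin m ↪o Fin n) (v : FVertex m G)
    (hv : v.leaves.Nonempty) (h' : (KH.pushV e v).leaves.Nonempty) :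
    (KH.pushV e v).coset ((KH.pushV e v).leaves.min' h') = v.coset (v.leaves.min' hv) := by
  rw [KH.pushV_min'_eq e v hv h', KH.pushV_coset_apply]

theorem KH.isFGForest_push_iff (ρ : Representation ℂ G VV) (e : Fin m ↪o Fin n)
    (F : Set (FVertex m G)) :
    IsFGForest ρ (KH.pushV e '' F) ↔ IsFGForest ρ F := by
  constructor
  · rintro ⟨h1, h2, h3, h4, h5, h6, h7, h8, h9, h10, h11, h12, h13⟩
    refine ⟨h1.of_finite_image ((KH.pushV_injective e).injOn), ?_, ?_, ?_, ?_, ?_, ?_, ?_, ?_, ?_, ?_, ?_, ?_⟩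
    · obtain ⟨x, x', hx', rfl⟩ := h2
      exact ⟨x', hx'⟩
    · intro v hv
      exact KH.pushV_leaves_nonempty_iff (e := e).mp (h3 _ ⟨v, hv, rfl⟩)
    · intro v hv
      exact h4 _ ⟨v, hv, rfl⟩
    · intro v hv w hw hint
      have := h5 _ ⟨v, hv, rfl⟩ _ ⟨w, hw, rfl⟩ ?_
      · rcases this with h | h
        · exact Or.inl (KH.pushV_leaves_subset_iff.mp h)
        · exact Or.inr (KH.pushV_leaves_subset_iff.mp h)
      · obtain ⟨x, hx⟩ := hint
        rw [Finset.mem_inter] at hx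
        exact ⟨e x, Finset.mem_inter.mpr ⟨KH.mem_pushV_leaves.mpr hx.1,
          KH.mem_pushV_leaves.mpr hx.2⟩⟩
    · intro v hv w hw hss
      exact h6 _ ⟨v, hv, rfl⟩ _ ⟨w, hw, rfl⟩ (KH.pushV_leaves_ssubset_iff.mpr hss)
    · intro v hv w hw hne heq
      exact h7 _ ⟨v, hv, rfl⟩ _ ⟨w, hw, rfl⟩
        (fun h => hne (KH.pushV_injective e h)) (KH.pushV_leaves_eq_iff.mpr heq)
    · intro v hv l hl hnc
      refine h8 _ ⟨v, hv, rfl⟩ (e l) (by rw [KH.pushV_leaves, hl]; simp) ?_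
      rintro ⟨w, ⟨w', hw', rfl⟩, hne, hleq, hlt⟩
      exact hnc ⟨w', hw', fun h => hne (by rw [h]), KH.pushV_leaves_eq_iff.mp hleq, hlt⟩
    · intro v hv w hw hvt hwt
      rcases h9 _ ⟨v, hv, rfl⟩ _ ⟨w, hw, rfl⟩ hvt hwt with h | h | h
      · exact Or.inl (KH.pushV_injective e h)
      · exact Or.inr (Or.inl (KH.pushV_below_iff.mp h))
      · exact Or.inr (Or.inr (KH.pushV_below_iff.mp h))
    · intro v hv l hl
      have := h10 _ ⟨v, hv, rfl⟩ (e l) (KH.mem_pushV_leaves.mpr hl)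
      simpa using this
    · intro v hv l hl
      have := h11 _ ⟨v, hv, rfl⟩ (e l) (fun hc => hl (KH.mem_pushV_leaves.mp hc))
      simpa using this
    · intro v hv w hw hdc
      obtain ⟨a, ha1, ha2, ha3⟩ := h12 _ ⟨v, hv, rfl⟩ _ ⟨w, hw, rfl⟩
        (KH.isDirectChild_push_iff.mpr hdc)
      refine ⟨a, by simpa using ha1, ?_, ?_⟩
      · intro l hl
        have := ha2 (e l) (KH.mem_pushV_leaves.mpr hl)
        simpa using this
      · intro hvne hmin
        refine ha3 (KH.pushV_leaves_nonempty_iff.mpr hvne) ?_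
        exact (KH.pushV_min'_mem_iff e v w hvne _).mpr hmin
    · intro v hv hvne
      have hp := h13 _ ⟨v, hv, rfl⟩ (KH.pushV_leaves_nonempty_iff.mpr hvne)
      have hp2 := (KH.pushV_coset_min' e v hvne _).symm.trans hp
      simpa using hp2
  · rintro ⟨h1, h2, h3, h4, h5, h6, h7, h8, h9, h10, h11, h12, h13⟩
    refine ⟨h1.image _, h2.image _, ?_, ?_, ?_, ?_, ?_, ?_, ?_, ?_, ?_, ?_, ?_⟩
    · rintro _ ⟨v, hv, rfl⟩
      exact KH.pushV_leaves_nonempty_iff.mpr (h3 v hv)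
    · rintro _ ⟨v, hv, rfl⟩
      exact h4 v hv
    · rintro _ ⟨v, hv, rfl⟩ _ ⟨w, hw, rfl⟩ hint
      have : (v.leaves ∩ w.leaves).Nonempty := by
        obtain ⟨x, hx⟩ := hint
        rw [Finset.mem_inter, KH.pushV_leaves, KH.pushV_leaves] at hx
        obtain ⟨k, hk, rfl⟩ := Finset.mem_map.mp hx.1
        have hk2 : k ∈ w.leaves := KH.mem_pushV_leaves.mp hx.2
        exact ⟨k, Finset.mem_inter.mpr ⟨hk, hk2⟩⟩
      rcases h5 v hv w hw this with h | h
      · exact Or.inl (KH.pushV_leaves_subset_iff.mpr h)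
      · exact Or.inr (KH.pushV_leaves_subset_iff.mpr h)
    · rintro _ ⟨v, hv, rfl⟩ _ ⟨w, hw, rfl⟩ hss
      exact h6 v hv w hw (KH.pushV_leaves_ssubset_iff.mp hss)
    · rintro _ ⟨v, hv, rfl⟩ _ ⟨w, hw, rfl⟩ hne heq
      exact h7 v hv w hw (fun h => hne (by rw [h])) (KH.pushV_leaves_eq_iff.mp heq)
    · rintro _ ⟨v, hv, rfl⟩ l hl hnc
      obtain ⟨k, hk, rfl⟩ := KH.map_eq_singleton_iff.mp hl
      refine h8 v hv k hk ?_
      rintro ⟨w, hw, hne, hleq, hlt⟩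
      exact hnc ⟨KH.pushV e w, ⟨w, hw, rfl⟩, fun h => hne (KH.pushV_injective e h),
        KH.pushV_leaves_eq_iff.mpr hleq, hlt⟩
    · rintro _ ⟨v, hv, rfl⟩ _ ⟨w, hw, rfl⟩ hvt hwt
      rcases h9 v hv w hw hvt hwt with h | h | h
      · exact Or.inl (by rw [h])
      · exact Or.inr (Or.inl (KH.pushV_below_iff.mpr h))
      · exact Or.inr (Or.inr (KH.pushV_below_iff.mpr h))
    · rintro _ ⟨v, hv, rfl⟩ l hl
      rw [KH.pushV_leaves, Finset.mem_map] at hl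
      obtain ⟨k, hk, rfl⟩ := hl
      simpa using h10 v hv k hk
    · rintro _ ⟨v, hv, rfl⟩ l hl
      by_cases hr : ∃ k, e k = l
      · obtain ⟨k, rfl⟩ := hr
        have hk : k ∉ v.leaves := fun hc => hl (KH.mem_pushV_leaves.mpr hc)
        simpa using h11 v hv k hk
      · push_neg at hr
        exact KH.pushV_coset_of_not_range hr v
    · rintro _ ⟨v, hv, rfl⟩ _ ⟨w, hw, rfl⟩ hdc
      obtain ⟨a, ha1, ha2, ha3⟩ := h12 v hv w hw (KH.isDirectChild_push_iff.mp hdc)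
      refine ⟨a, by simpa using ha1, ?_, ?_⟩
      · intro l hl
        rw [KH.pushV_leaves, Finset.mem_map] at hl
        obtain ⟨k, hk, rfl⟩ := hl
        simpa using ha2 k hk
      · intro hvne hmin
        have hv' : v.leaves.Nonempty := KH.pushV_leaves_nonempty_iff.mp hvne
        exact ha3 hv' ((KH.pushV_min'_mem_iff e v w hv' hvne).mp hmin)
    · rintro _ ⟨v, hv, rfl⟩ hvne
      have hv' : v.leaves.Nonempty := KH.pushV_leaves_nonempty_iff.mp hvne
      rw [KH.pushV_coset_min' e v hv' hvne]
      simpa using h13 v hv hv'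

theorem KH.isHTree_push_iff (ρ : Representation ℂ G VV) (HH : Subgroup G)
    (e : Fin m ↪o Fin n) (F : Set (FVertex m G)) (S : Finset (Fin n))
    (hrange : Finset.univ.map e.toEmbedding = S) :
    (IsHTree ρ HH F) ↔ (IsFGForest ρ (KH.pushV e '' F) ∧
      (∀ v ∈ KH.pushV e '' F, v.label = HH) ∧ ∃ v ∈ KH.pushV e '' F, v.leaves = S) := by
  unfold IsHTree
  rw [KH.isFGForest_push_iff]
  apply and_congr_right'
  constructor
  · rintro ⟨hlab, v, hv, hvl⟩
    refine ⟨?_, KH.pushV e v, ⟨v, hv, rfl⟩, by rw [KH.pushV_leaves, hvl, hrange]⟩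
    rintro _ ⟨w, hw, rfl⟩
    exact hlab w hw
  · rintro ⟨hlab, _, ⟨v, hv, rfl⟩, hvl⟩
    refine ⟨fun w hw => hlab _ ⟨w, hw, rfl⟩, v, hv, ?_⟩
    rw [KH.pushV_leaves, ← hrange] at hvl
    exact Finset.map_injective e.toEmbedding hvl
end KHTransport
section KHUnion
variable {G : Type*} [CommGroup G] {VV : Type*} [AddCommGroup VV] [Module ℂ VV]
variable {n : ℕ}

theorem KH.not_below_of_disjoint {a b : FVertex n G} (hd : Disjoint a.leaves b.leaves)
    (ha : a.leaves.Nonempty) : ¬ a.below b := by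
  intro h
  have hsub := KH.below_leaves_subset h
  obtain ⟨x, hx⟩ := ha
  exact Finset.disjoint_left.mp hd hx (hsub hx)

theorem KH.fallenLeaves_eq_empty_iff {F : Set (FVertex n G)} :
    fallenLeaves F = ∅ ↔ ∀ l : Fin n, ∃ v ∈ F, l ∈ v.leaves := by
  classical
  rw [fallenLeaves, Finset.filter_eq_empty_iff]
  constructor
  · intro h l
    have := h (Finset.mem_univ l)
    push_neg at this
    exact this
  · intro h l _
    push_neg
    exact h l

theorem KH.exists_root_above {F : Set (FVertex n G)} (hfin : F.Finite) :
    ∀ u ∈ F, ∃ r ∈ rootsOf F, u = r ∨ u.below r := by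
  classical
  have key : ∀ (k : ℕ), ∀ u ∈ F, ({v ∈ F | u.below v}).ncard ≤ k →
      ∃ r ∈ rootsOf F, u = r ∨ u.below r := by
    intro k
    induction k with
    | zero =>
      intro u hu hcard
      refine ⟨u, ⟨hu, fun w hw hb => ?_⟩, Or.inl rfl⟩
      have hmem : w ∈ {v ∈ F | u.below v} := ⟨hw, hb⟩
      have hfin' : ({v ∈ F | u.below v}).Finite := hfin.subset (fun x hx => hx.1)
      have : 0 < ({v ∈ F | u.below v}).ncard :=
        (Set.ncard_pos hfin').mpr ⟨w, hmem⟩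
      omega
    | succ k ih =>
      intro u hu hcard
      by_cases h : ∃ w ∈ F, u.below w
      · obtain ⟨w, hw, hb⟩ := h
        have hss : {v ∈ F | w.below v} ⊂ {v ∈ F | u.below v} := by
          constructor
          · rintro x ⟨hx, hbx⟩
            exact ⟨hx, KH.below_trans hb hbx⟩
          · intro hsub
            have : w ∈ {v ∈ F | w.below v} := hsub ⟨hw, hb⟩
            exact KH.below_irrefl w this.2
        have hlt : ({v ∈ F | w.below v}).ncard < ({v ∈ F | u.below v}).ncard :=
          Set.ncard_lt_ncard hss (hfin.subset (fun x hx => hx.1))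
        obtain ⟨r, hr, hror⟩ := ih w hw (by omega)
        refine ⟨r, hr, Or.inr ?_⟩
        rcases hror with rfl | hwr
        · exact hb
        · exact KH.below_trans hb hwr
      · push_neg at h
        exact ⟨u, ⟨hu, h⟩, Or.inl rfl⟩
  intro u hu
  exact key _ u hu le_rfl

theorem KH.isFGForest_union (ρ : Representation ℂ G VV) {A B : Set (FVertex n G)}
    (hA : IsFGForest ρ A) (hB : IsFGForest ρ B)
    (hd : ∀ a ∈ A, ∀ b ∈ B, Disjoint a.leaves b.leaves)
    (htop : ∀ a ∈ A, a.label ≠ ⊤) :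
    IsFGForest ρ (A ∪ B) := by
  obtain ⟨a1, a2, a3, a4, a5, a6, a7, a8, a9, a10, a11, a12, a13⟩ := hA
  obtain ⟨b1, b2, b3, b4, b5, b6, b7, b8, b9, b10, b11, b12, b13⟩ := hB
  have hint : ∀ a ∈ A, ∀ b ∈ B, ¬ (a.leaves ∩ b.leaves).Nonempty := by
    intro a ha b hb hne
    obtain ⟨x, hx⟩ := hne
    rw [Finset.mem_inter] at hx
    exact Finset.disjoint_left.mp (hd a ha b hb) hx.1 hx.2
  have hsub : ∀ a ∈ A, ∀ b ∈ B, ¬ a.leaves ⊆ b.leaves := by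
    intro a ha b hb hs
    obtain ⟨x, hx⟩ := a3 a ha
    exact hint a ha b hb ⟨x, Finset.mem_inter.mpr ⟨hx, hs hx⟩⟩
  have hsub' : ∀ a ∈ A, ∀ b ∈ B, ¬ b.leaves ⊆ a.leaves := by
    intro a ha b hb hs
    obtain ⟨x, hx⟩ := b3 b hb
    exact hint a ha b hb ⟨x, Finset.mem_inter.mpr ⟨hs hx, hx⟩⟩
  have hbel : ∀ a ∈ A, ∀ b ∈ B, ¬ a.below b :=
    fun a ha b hb => KH.not_below_of_disjoint (hd a ha b hb) (a3 a ha)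
  have hbel' : ∀ a ∈ A, ∀ b ∈ B, ¬ b.below a :=
    fun a ha b hb => KH.not_below_of_disjoint (hd a ha b hb).symm (b3 b hb)
  have hdcA : ∀ w v, IsDirectChild (A ∪ B) w v → IsDirectChild A w v :=
    fun w v ⟨h1, h2⟩ => ⟨h1, fun ⟨u, hu, u1, u2⟩ => h2 ⟨u, Or.inl hu, u1, u2⟩⟩
  have hdcB : ∀ w v, IsDirectChild (A ∪ B) w v → IsDirectChild B w v :=
    fun w v ⟨h1, h2⟩ => ⟨h1, fun ⟨u, hu, u1, u2⟩ => h2 ⟨u, Or.inr hu, u1, u2⟩⟩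
  refine ⟨a1.union b1, a2.mono Set.subset_union_left, ?_, ?_, ?_, ?_, ?_, ?_, ?_, ?_, ?_, ?_, ?_⟩
  · rintro v (hv | hv)
    exacts [a3 v hv, b3 v hv]
  · rintro v (hv | hv)
    exacts [a4 v hv, b4 v hv]
  · rintro v (hv | hv) w (hw | hw) h
    · exact a5 v hv w hw h
    · exact absurd h (hint v hv w hw)
    · exact absurd h (fun hh => hint w hw v hv (by
        obtain ⟨x, hx⟩ := hh
        rw [Finset.mem_inter] at hx
        exact ⟨x, Finset.mem_inter.mpr ⟨hx.2, hx.1⟩⟩))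
    · exact b5 v hv w hw h
  · rintro v (hv | hv) w (hw | hw) hss
    · exact a6 v hv w hw hss
    · exact absurd hss.subset (hsub' v hv w hw)
    · exact absurd hss.subset (hsub w hw v hv)
    · exact b6 v hv w hw hss
  · rintro v (hv | hv) w (hw | hw) hne heq
    · exact a7 v hv w hw hne heq
    · exact absurd (heq ▸ Finset.Subset.refl _) (hsub v hv w hw)
    · exact absurd (heq ▸ Finset.Subset.refl _) (hsub w hw v hv)
    · exact b7 v hv w hw hne heq
  · rintro v (hv | hv) l hl hnc
    · refine a8 v hv l hl ?_
      rintro ⟨w, hw, h1, h2, h3⟩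
      exact hnc ⟨w, Or.inl hw, h1, h2, h3⟩
    · refine b8 v hv l hl ?_
      rintro ⟨w, hw, h1, h2, h3⟩
      exact hnc ⟨w, Or.inr hw, h1, h2, h3⟩
  · rintro v (hv | hv) w (hw | hw) hvt hwt
    · exact a9 v hv w hw hvt hwt
    · exact absurd hvt (htop v hv)
    · exact absurd hwt (htop w hw)
    · exact b9 v hv w hw hvt hwt
  · rintro v (hv | hv) l hl
    exacts [a10 v hv l hl, b10 v hv l hl]
  · rintro v (hv | hv) l hl
    exacts [a11 v hv l hl, b11 v hv l hl]
  · rintro v (hv | hv) w (hw | hw) hdc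
    · exact a12 v hv w hw (hdcA w v hdc)
    · exact absurd hdc.1 (hbel' v hv w hw)
    · exact absurd hdc.1 (hbel w hw v hv)
    · exact b12 v hv w hw (hdcB w v hdc)
  · rintro v (hv | hv) hvne
    exacts [a13 v hv hvne, b13 v hv hvne]

theorem KH.isFGForest_subset (ρ : Representation ℂ G VV) {F A : Set (FVertex n G)}
    (hF : IsFGForest ρ F) (hAF : A ⊆ F) (hne : A.Nonempty)
    (hdc : ∀ u ∈ F, ∀ v ∈ A, u.below v → u ∈ A) : IsFGForest ρ A := by
  obtain ⟨a1, a2, a3, a4, a5, a6, a7, a8, a9, a10, a11, a12, a13⟩ := hF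
  have hdir : ∀ v ∈ A, ∀ w ∈ A, IsDirectChild A w v → IsDirectChild F w v := by
    rintro v hv w hw ⟨h1, h2⟩
    exact ⟨h1, fun ⟨u, hu, u1, u2⟩ => h2 ⟨u, hdc u hu v hv u2, u1, u2⟩⟩
  refine ⟨a1.subset hAF, hne, fun v hv => a3 v (hAF hv), fun v hv => a4 v (hAF hv),
    fun v hv w hw h => a5 v (hAF hv) w (hAF hw) h,
    fun v hv w hw h => a6 v (hAF hv) w (hAF hw) h,
    fun v hv w hw h h' => a7 v (hAF hv) w (hAF hw) h h', ?_,
    fun v hv w hw h h' => a9 v (hAF hv) w (hAF hw) h h',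
    fun v hv l hl => a10 v (hAF hv) l hl,
    fun v hv l hl => a11 v (hAF hv) l hl,
    fun v hv w hw h => a12 v (hAF hv) w (hAF hw) (hdir v hv w hw h),
    fun v hv h => a13 v (hAF hv) h⟩
  intro v hv l hl hnc
  refine a8 v (hAF hv) l hl ?_
  rintro ⟨w, hw, h1, h2, h3⟩
  refine hnc ⟨w, ?_, h1, h2, h3⟩
  exact hdc w hw v hv (KH.below_iff.mpr (Or.inr ⟨h2, KH.conjLT_iff.mp h3⟩))

end KHUnion
section KHStruct
variable {G : Type*} [CommGroup G] {VV : Type*} [AddCommGroup VV] [Module ℂ VV]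
variable {m n : ℕ}

theorem KH.fvertex_ext {v w : FVertex n G} (h1 : v.leaves = w.leaves)
    (h2 : v.label = w.label) (h3 : v.coset = w.coset) : v = w := by
  cases v; cases w
  simp_all

/-- Pull a vertex back along an order embedding of leaf sets. -/
noncomputable def KH.pullV (e : Fin m ↪o Fin n) (v : FVertex n G) : FVertex m G where
  leaves := v.leaves.preimage e (e.injective.injOn)
  label := v.label
  coset := fun k => v.coset (e k)

theorem KH.pushV_pullV (e : Fin m ↪o Fin n) (v : FVertex n G)
    (hrange : ∀ l ∈ v.leaves, ∃ k, e k = l)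
    (hcoset : ∀ l ∉ v.leaves, v.coset l = ∅) :
    KH.pushV e (KH.pullV e v) = v := by
  have hleaves : (KH.pushV e (KH.pullV e v)).leaves = v.leaves := by
    ext l
    simp only [KH.pushV_leaves, KH.pullV, Finset.mem_map, Finset.mem_preimage]
    constructor
    · rintro ⟨k, hk, rfl⟩
      exact hk
    · intro hl
      obtain ⟨k, rfl⟩ := hrange l hl
      exact ⟨k, hl, rfl⟩
  have hcos : (KH.pushV e (KH.pullV e v)).coset = v.coset := by
    funext l
    by_cases hr : ∃ k, e k = l
    · obtain ⟨k, rfl⟩ := hr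
      rw [KH.pushV_coset_apply]
      rfl
    · push_neg at hr
      rw [KH.pushV_coset_of_not_range hr]
      refine (hcoset l ?_).symm
      intro hl
      obtain ⟨k, hk⟩ := hrange l hl
      exact hr k hk
  exact KH.fvertex_ext hleaves rfl hcos

theorem KH.rootsOf_union {A B : Set (FVertex n G)}
    (hAB : ∀ a ∈ A, ∀ b ∈ B, ¬ a.below b ∧ ¬ b.below a) :
    rootsOf (A ∪ B) = rootsOf A ∪ rootsOf B := by
  ext v
  simp only [rootsOf, Set.mem_setOf_eq, Set.mem_union]
  constructor
  · rintro ⟨(hv | hv), h⟩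
    · exact Or.inl ⟨hv, fun w hw => h w (Or.inl hw)⟩
    · exact Or.inr ⟨hv, fun w hw => h w (Or.inr hw)⟩
  · rintro (⟨hv, h⟩ | ⟨hv, h⟩)
    · refine ⟨Or.inl hv, ?_⟩
      rintro w (hw | hw)
      · exact h w hw
      · exact (hAB v hv w hw).1
    · refine ⟨Or.inr hv, ?_⟩
      rintro w (hw | hw)
      · exact (hAB w hw v hv).2
      · exact h w hw

theorem KH.rootsOf_push (e : Fin m ↪o Fin n) (F : Set (FVertex m G)) :
    rootsOf (KH.pushV e '' F) = KH.pushV e '' rootsOf F := by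
  ext v
  simp only [rootsOf, Set.mem_setOf_eq, Set.mem_image]
  constructor
  · rintro ⟨⟨u, hu, rfl⟩, h⟩
    exact ⟨u, ⟨hu, fun w hw hb => h _ ⟨w, hw, rfl⟩ (KH.pushV_below_iff.mpr hb)⟩, rfl⟩
  · rintro ⟨u, ⟨hu, h⟩, rfl⟩
    refine ⟨⟨u, hu, rfl⟩, ?_⟩
    rintro _ ⟨w, hw, rfl⟩ hb
    exact h w hw (KH.pushV_below_iff.mp hb)

theorem KH.rootsOf_top {F : Set (FVertex n G)} {c : Subgroup G}
    (hlab : ∀ u ∈ F, u.label = c)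
    (h7 : ∀ v ∈ F, ∀ w ∈ F, v ≠ w → v.leaves = w.leaves →
      ConjLT v.label w.label ∨ ConjLT w.label v.label)
    {v : FVertex n G} (hv : v ∈ F) (htop : ∀ u ∈ F, u.leaves ⊆ v.leaves) :
    rootsOf F = {v} := by
  ext u
  simp only [rootsOf, Set.mem_setOf_eq, Set.mem_singleton_iff]
  constructor
  · rintro ⟨hu, h⟩
    by_contra hne
    by_cases heq : u.leaves = v.leaves
    · rcases h7 u hu v hv hne heq with hc | hc
      · rw [hlab u hu, hlab v hv] at hc
        exact absurd (KH.conjLT_iff.mp hc) (lt_irrefl c)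
      · rw [hlab u hu, hlab v hv] at hc
        exact absurd (KH.conjLT_iff.mp hc) (lt_irrefl c)
    · exact h v hv (KH.below_iff.mpr (Or.inl ⟨htop u hu, fun hh => heq
        (Finset.Subset.antisymm (htop u hu) hh)⟩))
  · rintro rfl
    refine ⟨hv, fun w hw hb => ?_⟩
    rw [KH.below_iff] at hb
    rcases hb with hb | ⟨heq, hlt⟩
    · exact hb.2 (htop w hw)
    · rw [hlab _ hv, hlab w hw] at hlt
      exact lt_irrefl c hlt

theorem KH.map_univ_orderEmbOfFin {k : ℕ} (s : Finset (Fin n)) (h : s.card = k) :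
    Finset.univ.map (s.orderEmbOfFin h).toEmbedding = s := by
  ext l
  constructor
  · intro hl
    obtain ⟨x, -, rfl⟩ := Finset.mem_map.mp hl
    exact Finset.orderEmbOfFin_mem s h x
  · intro hl
    have hr : l ∈ Set.range (s.orderEmbOfFin h) := by
      rw [Finset.range_orderEmbOfFin]
      exact hl
    obtain ⟨x, hx⟩ := hr
    exact Finset.mem_map.mpr ⟨x, Finset.mem_univ x, hx⟩

theorem KH.card_subtype_finset_card (N k : ℕ) :
    Nat.card {S : Finset (Fin N) // S.card = k} = N.choose k := by
  classical
  rw [Nat.card_eq_fintype_card, Fintype.card_subtype]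
  have heq : (Finset.filter (fun S : Finset (Fin N) => S.card = k) Finset.univ) =
      Finset.powersetCard k Finset.univ := by
    ext S
    simp [Finset.mem_powersetCard]
  rw [heq, Finset.card_powersetCard, Finset.card_univ, Fintype.card_fin]

end KHStruct
section KHPartA
variable {G : Type*} [CommGroup G] {VV : Type*} [AddCommGroup VV] [Module ℂ VV]
variable {m n : ℕ}

theorem KH.rootsOf_push_htree (ρ : Representation ℂ G VV) (c : Subgroup G)
    (e : Fin m ↪o Fin n) {F : Set (FVertex m G)} (h : IsHTree ρ c F) :
    ∃ r, rootsOf (KH.pushV e '' F) = {KH.pushV e r} ∧ r ∈ F ∧ r.leaves = Finset.univ := by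
  obtain ⟨hf, hlab, r, hr, hrl⟩ := h
  refine ⟨r, ?_, hr, hrl⟩
  rw [KH.rootsOf_push, KH.rootsOf_top hlab hf.2.2.2.2.2.2.1 hr
    (fun u _ => hrl ▸ Finset.subset_univ _)]
  exact Set.image_singleton

theorem KH.partA [Fintype G] (ρ : Representation ℂ G VV)
    (H K : Subgroup G) (hHK : H < K) (hKtop : K ≠ ⊤) (i j : ℕ) (hi : 0 < i) :
    Nat.card {F : Set (FVertex (i + j) G) // IsFGForest ρ F ∧
        ∃ v₁ ∈ F, ∃ v₂ ∈ F, v₁ ≠ v₂ ∧ rootsOf F = {v₁, v₂} ∧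
          fallenLeaves F = ∅ ∧
          (∀ u ∈ F, (u = v₁ ∨ u.below v₁) → u.label = K) ∧
          (∀ u ∈ F, (u = v₂ ∨ u.below v₂) → u.label = H) ∧
          v₁.leaves.card = i ∧ v₂.leaves.card = j} =
      (i + j).choose i * lamHT ρ K i * lamHT ρ H j := by
  classical
  have hcompl : ∀ S : Finset (Fin (i + j)), S.card = i → Sᶜ.card = j := by
    intro S hS
    rw [Finset.card_compl, Fintype.card_fin, hS]
    omega
  set D := ({S : Finset (Fin (i + j)) // S.card = i} ×
    {F₁ : Set (FVertex i G) // IsHTree ρ K F₁} ×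
    {F₂ : Set (FVertex j G) // IsHTree ρ H F₂}) with hD
  let eK : (x : D) → Fin i ↪o Fin (i + j) := fun x => x.1.1.orderEmbOfFin x.1.2
  let eH : (x : D) → Fin j ↪o Fin (i + j) := fun x =>
    (x.1.1ᶜ).orderEmbOfFin (hcompl _ x.1.2)
  let g : D → Set (FVertex (i + j) G) := fun x =>
    KH.pushV (eK x) '' x.2.1.1 ∪ KH.pushV (eH x) '' x.2.2.1
  -- basic facts about g x
  have hKrange : ∀ x : D, Finset.univ.map (eK x).toEmbedding = x.1.1 :=
    fun x => KH.map_univ_orderEmbOfFin _ _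
  have hHrange : ∀ x : D, Finset.univ.map (eH x).toEmbedding = x.1.1ᶜ :=
    fun x => KH.map_univ_orderEmbOfFin _ _
  have hAleaves : ∀ x : D, ∀ u ∈ KH.pushV (eK x) '' x.2.1.1, u.leaves ⊆ x.1.1 := by
    rintro x _ ⟨u, hu, rfl⟩
    rw [KH.pushV_leaves, ← hKrange x]
    exact Finset.map_subset_map.mpr (Finset.subset_univ _)
  have hBleaves : ∀ x : D, ∀ u ∈ KH.pushV (eH x) '' x.2.2.1, u.leaves ⊆ x.1.1ᶜ := by
    rintro x _ ⟨u, hu, rfl⟩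
    rw [KH.pushV_leaves, ← hHrange x]
    exact Finset.map_subset_map.mpr (Finset.subset_univ _)
  have hAlab : ∀ x : D, ∀ u ∈ KH.pushV (eK x) '' x.2.1.1, u.label = K := by
    rintro x _ ⟨u, hu, rfl⟩
    exact x.2.1.2.2.1 u hu
  have hBlab : ∀ x : D, ∀ u ∈ KH.pushV (eH x) '' x.2.2.1, u.label = H := by
    rintro x _ ⟨u, hu, rfl⟩
    exact x.2.2.2.2.1 u hu
  have hAforest : ∀ x : D, IsFGForest ρ (KH.pushV (eK x) '' x.2.1.1) :=
    fun x => (KH.isFGForest_push_iff ρ _ _).mpr x.2.1.2.1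
  have hBforest : ∀ x : D, IsFGForest ρ (KH.pushV (eH x) '' x.2.2.1) :=
    fun x => (KH.isFGForest_push_iff ρ _ _).mpr x.2.2.2.1
  have hdisj : ∀ x : D, ∀ a ∈ KH.pushV (eK x) '' x.2.1.1,
      ∀ b ∈ KH.pushV (eH x) '' x.2.2.1, Disjoint a.leaves b.leaves := by
    intro x a ha b hb
    refine Finset.disjoint_left.mpr fun l hla hlb => ?_
    have h1 := hAleaves x a ha hla
    have h2 := hBleaves x b hb hlb
    exact (Finset.mem_compl.mp h2) h1
  have hcross : ∀ x : D, ∀ a ∈ KH.pushV (eK x) '' x.2.1.1,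
      ∀ b ∈ KH.pushV (eH x) '' x.2.2.1, ¬ a.below b ∧ ¬ b.below a := by
    intro x a ha b hb
    exact ⟨KH.not_below_of_disjoint (hdisj x a ha b hb) ((hAforest x).2.2.1 a ha),
      KH.not_below_of_disjoint (hdisj x a ha b hb).symm ((hBforest x).2.2.1 b hb)⟩
  have hpred : ∀ x : D, IsFGForest ρ (g x) ∧
      ∃ v₁ ∈ g x, ∃ v₂ ∈ g x, v₁ ≠ v₂ ∧ rootsOf (g x) = {v₁, v₂} ∧
        fallenLeaves (g x) = ∅ ∧
        (∀ u ∈ g x, (u = v₁ ∨ u.below v₁) → u.label = K) ∧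
        (∀ u ∈ g x, (u = v₂ ∨ u.below v₂) → u.label = H) ∧
        v₁.leaves.card = i ∧ v₂.leaves.card = j := by
    intro x
    obtain ⟨r₁, hroots₁, hr₁, hr₁l⟩ := KH.rootsOf_push_htree ρ K (eK x) x.2.1.2
    obtain ⟨r₂, hroots₂, hr₂, hr₂l⟩ := KH.rootsOf_push_htree ρ H (eH x) x.2.2.2
    set v₁ := KH.pushV (eK x) r₁ with hv₁
    set v₂ := KH.pushV (eH x) r₂ with hv₂
    have hv₁mem : v₁ ∈ g x := Or.inl ⟨r₁, hr₁, rfl⟩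
    have hv₂mem : v₂ ∈ g x := Or.inr ⟨r₂, hr₂, rfl⟩
    have hv₁leaves : v₁.leaves = x.1.1 := by
      rw [hv₁, KH.pushV_leaves, hr₁l, hKrange x]
    have hv₂leaves : v₂.leaves = x.1.1ᶜ := by
      rw [hv₂, KH.pushV_leaves, hr₂l, hHrange x]
    have hforest : IsFGForest ρ (g x) :=
      KH.isFGForest_union ρ (hAforest x) (hBforest x) (hdisj x)
        (fun a ha => (hAlab x a ha) ▸ hKtop)
    refine ⟨hforest, v₁, hv₁mem, v₂, hv₂mem, ?_, ?_, ?_, ?_, ?_, ?_, ?_⟩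
    · intro h
      have h1 : v₁.label = K := hAlab x v₁ ⟨r₁, hr₁, rfl⟩
      have h2 : v₂.label = H := hBlab x v₂ ⟨r₂, hr₂, rfl⟩
      rw [h, h2] at h1
      exact hHK.ne h1
    · rw [show g x = _ ∪ _ from rfl, KH.rootsOf_union (hcross x), hroots₁, hroots₂]
      rw [Set.singleton_union]
    · rw [KH.fallenLeaves_eq_empty_iff]
      intro l
      by_cases hl : l ∈ x.1.1
      · exact ⟨v₁, hv₁mem, hv₁leaves ▸ hl⟩
      · exact ⟨v₂, hv₂mem, hv₂leaves ▸ Finset.mem_compl.mpr hl⟩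
    · rintro u (hu | hu) hc
      · exact hAlab x u hu
      · exfalso
        have hne : u.leaves.Nonempty := (hBforest x).2.2.1 u hu
        have hsub : u.leaves ⊆ x.1.1 := by
          rcases hc with rfl | hc
          · exact hv₁leaves ▸ Finset.Subset.refl _
          · exact hv₁leaves ▸ KH.below_leaves_subset hc
        obtain ⟨l, hl⟩ := hne
        exact Finset.mem_compl.mp (hBleaves x u hu hl) (hsub hl)
    · rintro u (hu | hu) hc
      · exfalso
        have hne : u.leaves.Nonempty := (hAforest x).2.2.1 u hu
        have hsub : u.leaves ⊆ x.1.1ᶜ := by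
          rcases hc with rfl | hc
          · exact hv₂leaves ▸ Finset.Subset.refl _
          · exact hv₂leaves ▸ KH.below_leaves_subset hc
        obtain ⟨l, hl⟩ := hne
        exact Finset.mem_compl.mp (hsub hl) (hAleaves x u hu hl)
      · exact hBlab x u hu
    · rw [hv₁leaves, x.1.2]
    · rw [hv₂leaves, hcompl _ x.1.2]
  -- the map into the subtype
  let f : D → {F : Set (FVertex (i + j) G) // IsFGForest ρ F ∧
      ∃ v₁ ∈ F, ∃ v₂ ∈ F, v₁ ≠ v₂ ∧ rootsOf F = {v₁, v₂} ∧
        fallenLeaves F = ∅ ∧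
        (∀ u ∈ F, (u = v₁ ∨ u.below v₁) → u.label = K) ∧
        (∀ u ∈ F, (u = v₂ ∨ u.below v₂) → u.label = H) ∧
        v₁.leaves.card = i ∧ v₂.leaves.card = j} := fun x => ⟨g x, hpred x⟩
  -- the K-part and S are recoverable from g x
  have hSdesc : ∀ x : D, (x.1.1 : Set (Fin (i + j))) =
      {l | ∃ u ∈ g x, u.label = K ∧ l ∈ u.leaves} := by
    intro x
    obtain ⟨r₁, hroots₁, hr₁, hr₁l⟩ := KH.rootsOf_push_htree ρ K (eK x) x.2.1.2
    ext l
    simp only [Finset.coe_mem, Set.mem_setOf_eq, Finset.mem_coe]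
    constructor
    · intro hl
      refine ⟨KH.pushV (eK x) r₁, Or.inl ⟨r₁, hr₁, rfl⟩, hAlab x _ ⟨r₁, hr₁, rfl⟩, ?_⟩
      rw [KH.pushV_leaves, hr₁l, hKrange x]
      exact hl
    · rintro ⟨u, (hu | hu), hlab, hl⟩
      · exact hAleaves x u hu hl
      · rw [hBlab x u hu] at hlab
        exact absurd hlab hHK.ne
  have hApart : ∀ x : D, KH.pushV (eK x) '' x.2.1.1 = {u ∈ g x | u.label = K} := by
    intro x
    ext u
    constructor
    · intro hu
      exact ⟨Or.inl hu, hAlab x u hu⟩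
    · rintro ⟨(hu | hu), hlab⟩
      · exact hu
      · rw [hBlab x u hu] at hlab
        exact absurd hlab hHK.ne
  have hBpart : ∀ x : D, KH.pushV (eH x) '' x.2.2.1 = {u ∈ g x | u.label = H} := by
    intro x
    ext u
    constructor
    · intro hu
      exact ⟨Or.inr hu, hBlab x u hu⟩
    · rintro ⟨(hu | hu), hlab⟩
      · rw [hAlab x u hu] at hlab
        exact absurd hlab hHK.ne'
      · exact hu
  have hinj : Function.Injective f := by
    intro x y hxy
    have hg : g x = g y := congrArg Subtype.val hxy
    have hS : x.1.1 = y.1.1 := by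
      apply Finset.coe_injective
      rw [hSdesc x, hSdesc y, hg]
    obtain ⟨⟨Sx, hSx⟩, ⟨F₁x, hF₁x⟩, ⟨F₂x, hF₂x⟩⟩ := x
    obtain ⟨⟨Sy, hSy⟩, ⟨F₁y, hF₁y⟩, ⟨F₂y, hF₂y⟩⟩ := y
    simp only at hS
    subst hS
    have heKxy : ∀ z w, eK (⟨Sx, hSx⟩, z, w) = eK (⟨Sx, hSy⟩, z, w) := fun _ _ => rfl
    have hA : KH.pushV (Sx.orderEmbOfFin hSx) '' F₁x =
        KH.pushV (Sx.orderEmbOfFin hSy) '' F₁y := by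
      have h1 := hApart (⟨Sx, hSx⟩, ⟨F₁x, hF₁x⟩, ⟨F₂x, hF₂x⟩)
      have h2 := hApart (⟨Sx, hSy⟩, ⟨F₁y, hF₁y⟩, ⟨F₂y, hF₂y⟩)
      simp only [eK] at h1 h2
      rw [h1, h2, hg]
    have hB : KH.pushV ((Sxᶜ).orderEmbOfFin (hcompl _ hSx)) '' F₂x =
        KH.pushV ((Sxᶜ).orderEmbOfFin (hcompl _ hSy)) '' F₂y := by
      have h1 := hBpart (⟨Sx, hSx⟩, ⟨F₁x, hF₁x⟩, ⟨F₂x, hF₂x⟩)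
      have h2 := hBpart (⟨Sx, hSy⟩, ⟨F₁y, hF₁y⟩, ⟨F₂y, hF₂y⟩)
      simp only [eH] at h1 h2
      rw [h1, h2, hg]
    have hF₁ : F₁x = F₁y :=
      (Set.image_injective.mpr (KH.pushV_injective _)) hA
    have hF₂ : F₂x = F₂y :=
      (Set.image_injective.mpr (KH.pushV_injective _)) hB
    subst hF₁
    subst hF₂
    rfl
  have hsurj : Function.Surjective f := by
    rintro ⟨F, hFor, v₁, hv₁, v₂, hv₂, hne, hroots, hfall, hlabK, hlabH, hci, hcj⟩
    obtain ⟨f1, f2, f3, f4, f5, f6, f7, f8, f9, f10, f11, f12, f13⟩ := id hFor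
    have hv₁root : v₁ ∈ rootsOf F := by rw [hroots]; exact Or.inl rfl
    have hv₂root : v₂ ∈ rootsOf F := by rw [hroots]; exact Or.inr rfl
    have hv₁lab : v₁.label = K := hlabK v₁ hv₁ (Or.inl rfl)
    have hv₂lab : v₂.label = H := hlabH v₂ hv₂ (Or.inl rfl)
    have hdisj12 : Disjoint v₁.leaves v₂.leaves := by
      by_contra hc
      have hint : (v₁.leaves ∩ v₂.leaves).Nonempty := by
        rw [Finset.not_disjoint_iff] at hc
        obtain ⟨a, h1, h2⟩ := hc
        exact ⟨a, Finset.mem_inter.mpr ⟨h1, h2⟩⟩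
      rcases f5 v₁ hv₁ v₂ hv₂ hint with hsub | hsub
      · by_cases heq : v₁.leaves = v₂.leaves
        · rcases f7 v₁ hv₁ v₂ hv₂ hne heq with hlt | hlt
          · rw [KH.conjLT_iff, hv₁lab, hv₂lab] at hlt
            exact absurd (hlt.trans hHK) (lt_irrefl K)
          · exact hv₂root.2 v₁ hv₁
              (KH.below_iff.mpr (Or.inr ⟨heq.symm, KH.conjLT_iff.mp hlt⟩))
        · exact hv₁root.2 v₂ hv₂ (KH.below_iff.mpr (Or.inl (Finset.ssubset_iff_subset_ne.mpr ⟨hsub, heq⟩)))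
      · by_cases heq : v₂.leaves = v₁.leaves
        · rcases f7 v₁ hv₁ v₂ hv₂ hne heq.symm with hlt | hlt
          · rw [KH.conjLT_iff, hv₁lab, hv₂lab] at hlt
            exact absurd (hlt.trans hHK) (lt_irrefl K)
          · exact hv₂root.2 v₁ hv₁
              (KH.below_iff.mpr (Or.inr ⟨heq, KH.conjLT_iff.mp hlt⟩))
        · exact hv₂root.2 v₁ hv₁ (KH.below_iff.mpr (Or.inl (Finset.ssubset_iff_subset_ne.mpr ⟨hsub, heq⟩)))
    have hv₂compl : v₂.leaves = v₁.leavesᶜ := by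
      apply Finset.eq_of_subset_of_card_le
      · intro l hl
        exact Finset.mem_compl.mpr (Finset.disjoint_right.mp hdisj12 hl)
      · rw [hcompl _ hci, hcj]
    set A := {u | u ∈ F ∧ (u = v₁ ∨ u.below v₁)} with hAdef
    set B := {u | u ∈ F ∧ (u = v₂ ∨ u.below v₂)} with hBdef
    have hFAB : F = A ∪ B := by
      ext u
      constructor
      · intro hu
        obtain ⟨r, hr, hur⟩ := KH.exists_root_above f1 u hu
        rw [hroots] at hr
        rcases hr with rfl | rfl
        · exact Or.inl ⟨hu, hur⟩
        · exact Or.inr ⟨hu, hur⟩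
      · rintro (hu | hu)
        exacts [hu.1, hu.1]
    have hAdc : ∀ u ∈ F, ∀ a ∈ A, u.below a → u ∈ A := by
      rintro u hu a ⟨haf, (rfl | hab)⟩ hb
      · exact ⟨hu, Or.inr hb⟩
      · exact ⟨hu, Or.inr (KH.below_trans hb hab)⟩
    have hBdc : ∀ u ∈ F, ∀ a ∈ B, u.below a → u ∈ B := by
      rintro u hu a ⟨haf, (rfl | hab)⟩ hb
      · exact ⟨hu, Or.inr hb⟩
      · exact ⟨hu, Or.inr (KH.below_trans hb hab)⟩
    have hAfor : IsFGForest ρ A :=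
      KH.isFGForest_subset ρ hFor (fun u hu => hu.1) ⟨v₁, hv₁, Or.inl rfl⟩ hAdc
    have hBfor : IsFGForest ρ B :=
      KH.isFGForest_subset ρ hFor (fun u hu => hu.1) ⟨v₂, hv₂, Or.inl rfl⟩ hBdc
    have hAlea : ∀ u ∈ A, u.leaves ⊆ v₁.leaves := by
      rintro u ⟨huf, (rfl | hb)⟩
      · exact Finset.Subset.refl _
      · exact KH.below_leaves_subset hb
    have hBlea : ∀ u ∈ B, u.leaves ⊆ v₂.leaves := by
      rintro u ⟨huf, (rfl | hb)⟩
      · exact Finset.Subset.refl _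
      · exact KH.below_leaves_subset hb
    set eK' := v₁.leaves.orderEmbOfFin hci with heK'
    set eH' := (v₁.leavesᶜ).orderEmbOfFin (hcompl _ hci) with heH'
    have hppA : KH.pushV eK' '' (KH.pullV eK' '' A) = A := by
      rw [← Set.image_comp]
      have hcongr : ∀ u ∈ A, (KH.pushV eK' ∘ KH.pullV eK') u = u := by
        intro u hu
        apply KH.pushV_pullV
        · intro l hl
          have : l ∈ Set.range eK' := by
            rw [Finset.range_orderEmbOfFin]
            exact hAlea u hu hl
          exact this
        · exact fun l hl => f11 u hu.1 l hl
      rw [Set.image_congr hcongr, Set.image_id']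
    have hppB : KH.pushV eH' '' (KH.pullV eH' '' B) = B := by
      rw [← Set.image_comp]
      have hcongr : ∀ u ∈ B, (KH.pushV eH' ∘ KH.pullV eH') u = u := by
        intro u hu
        apply KH.pushV_pullV
        · intro l hl
          have : l ∈ Set.range eH' := by
            rw [Finset.range_orderEmbOfFin]
            exact Finset.mem_coe.mpr (hv₂compl ▸ hBlea u hu hl)
          exact this
        · exact fun l hl => f11 u hu.1 l hl
      rw [Set.image_congr hcongr, Set.image_id']
    have hT₁ : IsHTree ρ K (KH.pullV eK' '' A) := by
      refine (KH.isHTree_push_iff ρ K eK' (KH.pullV eK' '' A) v₁.leaves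
        (KH.map_univ_orderEmbOfFin _ _)).mpr ?_
      rw [hppA]
      exact ⟨hAfor, fun u hu => hlabK u hu.1 hu.2, v₁, ⟨hv₁, Or.inl rfl⟩, rfl⟩
    have hT₂ : IsHTree ρ H (KH.pullV eH' '' B) := by
      refine (KH.isHTree_push_iff ρ H eH' (KH.pullV eH' '' B) v₁.leavesᶜ
        (KH.map_univ_orderEmbOfFin _ _)).mpr ?_
      rw [hppB]
      exact ⟨hBfor, fun u hu => hlabH u hu.1 hu.2, v₂, ⟨hv₂, Or.inl rfl⟩, hv₂compl⟩
    refine ⟨(⟨v₁.leaves, hci⟩, ⟨KH.pullV eK' '' A, hT₁⟩, ⟨KH.pullV eH' '' B, hT₂⟩), ?_⟩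
    apply Subtype.ext
    show g _ = F
    show KH.pushV eK' '' (KH.pullV eK' '' A) ∪ KH.pushV eH' '' (KH.pullV eH' '' B) = F
    rw [hppA, hppB, ← hFAB]
  have hcard := Nat.card_eq_of_bijective f ⟨hinj, hsurj⟩
  rw [← hcard, hD, Nat.card_prod, Nat.card_prod, KH.card_subtype_finset_card,
    mul_assoc]
  rfl
end KHPartA
section KHExpand
variable {G : Type*} [CommGroup G] {N : ℕ}

/-- Expand a vertex by replacing the single leaf `t₀` by the leaf set `T`
(grafting in a subtree with leaf set `T` and root coset data `wcos`). -/
noncomputable def KH.expandV (T : Finset (Fin N)) (t₀ : Fin N) (wcos : Fin N → Set G)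
    (v : FVertex N G) : FVertex N G :=
  if t₀ ∈ v.leaves then
    ⟨v.leaves ∪ T, v.label, fun l => if l ∈ T then wcos l * v.coset t₀ else v.coset l⟩
  else v

/-- Collapse the leaf set `T` of a vertex to the single leaf `t₀`. -/
noncomputable def KH.unexpandV (T : Finset (Fin N)) (t₀ : Fin N)
    (v : FVertex N G) : FVertex N G :=
  if T ⊆ v.leaves then
    ⟨(v.leaves \ T) ∪ {t₀}, v.label, fun l => if l ∈ T \ {t₀} then ∅ else v.coset l⟩
  else v

variable {T : Finset (Fin N)} {t₀ : Fin N} {wcos : Fin N → Set G}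

theorem KH.expandV_leaves_pos {v : FVertex N G} (h : t₀ ∈ v.leaves) :
    (KH.expandV T t₀ wcos v).leaves = v.leaves ∪ T := by
  rw [KH.expandV, if_pos h]

theorem KH.expandV_neg {v : FVertex N G} (h : t₀ ∉ v.leaves) :
    KH.expandV T t₀ wcos v = v := by
  rw [KH.expandV, if_neg h]

@[simp] theorem KH.expandV_label (v : FVertex N G) :
    (KH.expandV T t₀ wcos v).label = v.label := by
  rw [KH.expandV]
  split <;> rfl

theorem KH.expandV_coset_mem {v : FVertex N G} (h : t₀ ∈ v.leaves) {l : Fin N}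
    (hl : l ∈ T) : (KH.expandV T t₀ wcos v).coset l = wcos l * v.coset t₀ := by
  rw [KH.expandV, if_pos h]
  exact if_pos hl

theorem KH.expandV_coset_notMem (v : FVertex N G) {l : Fin N} (hl : l ∉ T) :
    (KH.expandV T t₀ wcos v).coset l = v.coset l := by
  rw [KH.expandV]
  split
  · exact if_neg hl
  · rfl

theorem KH.leaves_inter_T {v : FVertex N G} (hS : v.leaves ⊆ Tᶜ ∪ {t₀}) :
    v.leaves ∩ T ⊆ {t₀} := by
  intro l hl
  rw [Finset.mem_inter] at hl
  rcases Finset.mem_union.mp (hS hl.1) with h | h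
  · exact absurd hl.2 (Finset.mem_compl.mp h)
  · exact h

theorem KH.expandV_leaves_inter {v : FVertex N G} (hS : v.leaves ⊆ Tᶜ ∪ {t₀})
    (h : t₀ ∈ v.leaves) : v.leaves ∩ T = {t₀} ∩ T := by
  apply Finset.Subset.antisymm
  · intro l hl
    have := KH.leaves_inter_T hS hl
    rw [Finset.mem_singleton] at this
    subst this
    exact Finset.mem_inter.mpr ⟨Finset.mem_singleton_self _, (Finset.mem_inter.mp hl).2⟩
  · intro l hl
    rw [Finset.mem_inter, Finset.mem_singleton] at hl
    obtain ⟨rfl, hlT⟩ := hl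
    exact Finset.mem_inter.mpr ⟨h, hlT⟩

-- recovery of original leaves
theorem KH.expandV_leaves_recover {v : FVertex N G} (hS : v.leaves ⊆ Tᶜ ∪ {t₀})
    (h : t₀ ∈ v.leaves) : ((v.leaves ∪ T) \ T) ∪ {t₀} = v.leaves := by
  ext l
  simp only [Finset.mem_union, Finset.mem_sdiff, Finset.mem_singleton]
  constructor
  · rintro (⟨(h1 | h1), h2⟩ | rfl)
    · exact h1
    · exact absurd h1 h2
    · exact h
  · intro hl
    by_cases hlT : l ∈ T
    · exact Or.inr (Finset.mem_singleton.mp (KH.leaves_inter_T hS (Finset.mem_inter.mpr ⟨hl, hlT⟩)))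
    · exact Or.inl ⟨Or.inl hl, hlT⟩

theorem KH.expandV_leaves_subset_iff (ht₀T : t₀ ∈ T) {v v' : FVertex N G}
    (hS : v.leaves ⊆ Tᶜ ∪ {t₀}) (hS' : v'.leaves ⊆ Tᶜ ∪ {t₀}) :
    (KH.expandV T t₀ wcos v).leaves ⊆ (KH.expandV T t₀ wcos v').leaves ↔
      v.leaves ⊆ v'.leaves := by
  by_cases h : t₀ ∈ v.leaves <;> by_cases h' : t₀ ∈ v'.leaves
  · rw [KH.expandV_leaves_pos h, KH.expandV_leaves_pos h']
    constructor
    · intro hsub l hl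
      rcases Finset.mem_union.mp (hsub (Finset.mem_union_left _ hl)) with h1 | h1
      · exact h1
      · have : l = t₀ := Finset.mem_singleton.mp (KH.leaves_inter_T hS (Finset.mem_inter.mpr ⟨hl, h1⟩))
        exact this ▸ h'
    · intro hsub
      exact Finset.union_subset_union hsub (Finset.Subset.refl _)
  · rw [KH.expandV_leaves_pos h, KH.expandV_neg h']
    constructor
    · intro hsub
      exact absurd (hsub (Finset.mem_union_right _ ht₀T)) h'
    · intro hsub
      exact absurd (hsub h) h'
  · rw [KH.expandV_neg h, KH.expandV_leaves_pos h']
    constructor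
    · intro hsub l hl
      rcases Finset.mem_union.mp (hsub hl) with h1 | h1
      · exact h1
      · exact absurd ((Finset.mem_singleton.mp (KH.leaves_inter_T hS (Finset.mem_inter.mpr ⟨hl, h1⟩))) ▸ hl) h
    · intro hsub
      exact hsub.trans Finset.subset_union_left
  · rw [KH.expandV_neg h, KH.expandV_neg h']

theorem KH.expandV_leaves_eq_iff (ht₀T : t₀ ∈ T) {v v' : FVertex N G}
    (hS : v.leaves ⊆ Tᶜ ∪ {t₀}) (hS' : v'.leaves ⊆ Tᶜ ∪ {t₀}) :
    (KH.expandV T t₀ wcos v).leaves = (KH.expandV T t₀ wcos v').leaves ↔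
      v.leaves = v'.leaves := by
  constructor
  · intro hle
    apply Finset.Subset.antisymm
    · exact (KH.expandV_leaves_subset_iff ht₀T hS hS').mp hle.le
    · exact (KH.expandV_leaves_subset_iff ht₀T hS' hS).mp hle.ge
  · intro hle
    apply Finset.Subset.antisymm
    · exact (KH.expandV_leaves_subset_iff ht₀T hS hS').mpr hle.le
    · exact (KH.expandV_leaves_subset_iff ht₀T hS' hS).mpr hle.ge

theorem KH.expandV_below_iff (ht₀T : t₀ ∈ T) {v v' : FVertex N G}
    (hS : v.leaves ⊆ Tᶜ ∪ {t₀}) (hS' : v'.leaves ⊆ Tᶜ ∪ {t₀}) :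
    (KH.expandV T t₀ wcos v).below (KH.expandV T t₀ wcos v') ↔ v.below v' := by
  rw [KH.below_iff, KH.below_iff]
  have h1 := KH.expandV_leaves_subset_iff (wcos := wcos) ht₀T hS hS'
  have h2 := KH.expandV_leaves_eq_iff (wcos := wcos) ht₀T hS hS'
  rw [Finset.ssubset_iff_subset_ne, Finset.ssubset_iff_subset_ne, h1, h2]
  simp only [ne_eq, h2, KH.expandV_label]

theorem KH.expandV_min' (ht₀T : t₀ ∈ T) (hmin : ∀ l ∈ T, t₀ ≤ l) {v : FVertex N G}
    (hv : v.leaves.Nonempty) (hv' : (KH.expandV T t₀ wcos v).leaves.Nonempty) :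
    (KH.expandV T t₀ wcos v).leaves.min' hv' = v.leaves.min' hv := by
  by_cases h : t₀ ∈ v.leaves
  · have hle : (KH.expandV T t₀ wcos v).leaves = v.leaves ∪ T := KH.expandV_leaves_pos h
    apply le_antisymm
    · exact Finset.min'_le _ _ (by rw [hle]; exact Finset.mem_union_left _ (v.leaves.min'_mem hv))
    · apply Finset.le_min'
      intro y hy
      rw [hle, Finset.mem_union] at hy
      rcases hy with hy | hy
      · exact Finset.min'_le _ _ hy
      · exact (Finset.min'_le _ _ h).trans (hmin y hy)
  · congr 1
    rw [KH.expandV_neg h]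

theorem KH.smul_coset_eq_self {K : Subgroup G} {a : G} (h : a • (K : Set G) = K) :
    a ∈ K := by
  have : a ∈ a • (K : Set G) := ⟨1, K.one_mem, mul_one a⟩
  rwa [h, SetLike.mem_coe] at this

end KHExpand
section KHUnexpand
variable {G : Type*} [CommGroup G] {N : ℕ}
variable {T : Finset (Fin N)} {t₀ : Fin N} {wcos : Fin N → Set G}

theorem KH.unexpandV_pos {v : FVertex N G} (h : T ⊆ v.leaves) :
    KH.unexpandV T t₀ v =
      ⟨(v.leaves \ T) ∪ {t₀}, v.label, fun l => if l ∈ T \ {t₀} then ∅ else v.coset l⟩ := by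
  rw [KH.unexpandV, if_pos h]

theorem KH.unexpandV_neg {v : FVertex N G} (h : ¬ T ⊆ v.leaves) :
    KH.unexpandV T t₀ v = v := by
  rw [KH.unexpandV, if_neg h]

@[simp] theorem KH.unexpandV_label (v : FVertex N G) :
    (KH.unexpandV T t₀ (G := G) v).label = v.label := by
  rw [KH.unexpandV]
  split <;> rfl

theorem KH.expandV_coset_t₀' {HH KK : Subgroup G} (ht₀T : t₀ ∈ T)
    (hwt₀ : wcos t₀ = (HH : Set G)) (hHK : HH ≤ KK) {v : FVertex N G}
    (h : t₀ ∈ v.leaves) (h10 : ∃ a : G, v.coset t₀ = a • (KK : Set G)) :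
    (KH.expandV T t₀ wcos v).coset t₀ = v.coset t₀ := by
  obtain ⟨a, ha⟩ := h10
  rw [KH.expandV_coset_mem h ht₀T, hwt₀, ha, KH.sub_coset_mul hHK]

/-- unexpand ∘ expand = id on expandable vertices. -/
theorem KH.unexpandV_expandV {HH KK : Subgroup G} (ht₀T : t₀ ∈ T)
    (hwt₀ : wcos t₀ = (HH : Set G)) (hHK : HH ≤ KK) {v : FVertex N G}
    (hS : v.leaves ⊆ Tᶜ ∪ {t₀})
    (h10 : t₀ ∈ v.leaves → ∃ a : G, v.coset t₀ = a • (KK : Set G))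
    (h11 : ∀ l ∉ v.leaves, v.coset l = ∅) :
    KH.unexpandV T t₀ (KH.expandV T t₀ wcos v) = v := by
  by_cases h : t₀ ∈ v.leaves
  · have hsub : T ⊆ (KH.expandV T t₀ wcos v).leaves := by
      rw [KH.expandV_leaves_pos h]
      exact Finset.subset_union_right
    rw [KH.unexpandV_pos hsub]
    apply KH.fvertex_ext
    · show ((KH.expandV T t₀ wcos v).leaves \ T) ∪ {t₀} = v.leaves
      rw [KH.expandV_leaves_pos h]
      exact KH.expandV_leaves_recover hS h
    · exact KH.expandV_label v
    · funext l
      show (if l ∈ T \ {t₀} then ∅ else (KH.expandV T t₀ wcos v).coset l) = v.coset l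
      by_cases hl : l ∈ T \ {t₀}
      · rw [if_pos hl]
        rw [Finset.mem_sdiff, Finset.mem_singleton] at hl
        refine (h11 l fun hc => hl.2 ?_).symm
        exact Finset.mem_singleton.mp (KH.leaves_inter_T hS (Finset.mem_inter.mpr ⟨hc, hl.1⟩))
      · rw [if_neg hl]
        rw [Finset.mem_sdiff, Finset.mem_singleton] at hl
        push_neg at hl
        by_cases hlT : l ∈ T
        · have : l = t₀ := hl hlT
          subst this
          exact KH.expandV_coset_t₀' ht₀T hwt₀ hHK h (h10 h)
        · exact KH.expandV_coset_notMem v hlT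
  · rw [KH.expandV_neg h, KH.unexpandV_neg]
    intro hc
    exact h (hc ht₀T)

/-- expand ∘ unexpand = id on graft-closed vertices (whose coset data factors
through the root of the grafted subtree). -/
theorem KH.expandV_unexpandV (ht₀T : t₀ ∈ T) {v : FVertex N G}
    (hcases : T ⊆ v.leaves ∨ Disjoint v.leaves T)
    (hCL : T ⊆ v.leaves → ∀ l ∈ T, v.coset l = wcos l * v.coset t₀) :
    KH.expandV T t₀ wcos (KH.unexpandV T t₀ v) = v := by
  rcases hcases with hsub | hdis
  · set u : FVertex N G := ⟨(v.leaves \ T) ∪ {t₀}, v.label,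
      fun l => if l ∈ T \ {t₀} then ∅ else v.coset l⟩ with hu
    rw [KH.unexpandV_pos hsub, ← hu]
    have ht₀u : t₀ ∈ u.leaves := Finset.mem_union_right _ (Finset.mem_singleton_self t₀)
    apply KH.fvertex_ext
    · rw [KH.expandV_leaves_pos ht₀u]
      show ((v.leaves \ T) ∪ {t₀}) ∪ T = v.leaves
      ext l
      simp only [Finset.mem_union, Finset.mem_sdiff, Finset.mem_singleton]
      constructor
      · rintro ((⟨h1, _⟩ | rfl) | h1)
        · exact h1
        · exact hsub ht₀T
        · exact hsub h1
      · intro hl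
        by_cases hlT : l ∈ T
        · exact Or.inr hlT
        · exact Or.inl (Or.inl ⟨hl, hlT⟩)
    · exact KH.expandV_label u
    · funext l
      by_cases hlT : l ∈ T
      · rw [KH.expandV_coset_mem ht₀u hlT]
        have hut₀ : u.coset t₀ = v.coset t₀ := by
          show (if t₀ ∈ T \ {t₀} then ∅ else v.coset t₀) = v.coset t₀
          rw [if_neg (fun hc => (Finset.mem_sdiff.mp hc).2 (Finset.mem_singleton_self t₀))]
        rw [hut₀]
        exact (hCL hsub l hlT).symm
      · rw [KH.expandV_coset_notMem u hlT]
        show (if l ∈ T \ {t₀} then ∅ else v.coset l) = v.coset l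
        rw [if_neg (fun hc => hlT (Finset.mem_sdiff.mp hc).1)]
  · have ht₀v : t₀ ∉ v.leaves := Finset.disjoint_right.mp hdis ht₀T
    have hns : ¬ T ⊆ v.leaves := fun hc => ht₀v (hc ht₀T)
    rw [KH.unexpandV_neg hns, KH.expandV_neg ht₀v]

theorem KH.unexpandV_leaves_subset (ht₀T : t₀ ∈ T) {v : FVertex N G}
    (hcases : T ⊆ v.leaves ∨ Disjoint v.leaves T) :
    (KH.unexpandV T t₀ v).leaves ⊆ Tᶜ ∪ {t₀} := by
  rcases hcases with hsub | hdis
  · rw [KH.unexpandV_pos hsub]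
    intro l hl
    rcases Finset.mem_union.mp hl with h | h
    · exact Finset.mem_union_left _ (Finset.mem_compl.mpr (Finset.mem_sdiff.mp h).2)
    · exact Finset.mem_union_right _ h
  · rw [KH.unexpandV_neg (fun hc => (Finset.disjoint_right.mp hdis ht₀T) (hc ht₀T))]
    intro l hl
    exact Finset.mem_union_left _ (Finset.mem_compl.mpr (Finset.disjoint_left.mp hdis hl))

theorem KH.unexpandV_leaves_pos {v : FVertex N G} (hsub : T ⊆ v.leaves) :
    (KH.unexpandV T t₀ v).leaves = (v.leaves \ T) ∪ {t₀} := by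
  rw [KH.unexpandV_pos hsub]

theorem KH.unexpandV_t₀_mem {v : FVertex N G} (hsub : T ⊆ v.leaves) :
    t₀ ∈ (KH.unexpandV T t₀ v).leaves := by
  rw [KH.unexpandV_leaves_pos hsub]
  exact Finset.mem_union_right _ (Finset.mem_singleton_self t₀)

theorem KH.unexpandV_coset_t₀ {v : FVertex N G} (hsub : T ⊆ v.leaves) :
    (KH.unexpandV T t₀ v).coset t₀ = v.coset t₀ := by
  rw [KH.unexpandV_pos hsub]
  show (if t₀ ∈ T \ {t₀} then ∅ else v.coset t₀) = v.coset t₀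
  rw [if_neg (fun hc => (Finset.mem_sdiff.mp hc).2 (Finset.mem_singleton_self t₀))]

theorem KH.unexpandV_coset_notMem {v : FVertex N G} {l : Fin N} (hl : l ∉ T) :
    (KH.unexpandV T t₀ v).coset l = v.coset l := by
  rw [KH.unexpandV]
  split
  · show (if l ∈ T \ {t₀} then ∅ else v.coset l) = v.coset l
    rw [if_neg (fun hc => hl (Finset.mem_sdiff.mp hc).1)]
  · rfl

theorem KH.min'_sdiff_union {s : Finset (Fin N)} (ht₀T : t₀ ∈ T)
    (hmin : ∀ l ∈ T, t₀ ≤ l) (hsub : T ⊆ s)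
    (h1 : ((s \ T) ∪ {t₀}).Nonempty) (h2 : s.Nonempty) :
    ((s \ T) ∪ {t₀}).min' h1 = s.min' h2 := by
  have ht₀s : t₀ ∈ s := hsub ht₀T
  apply le_antisymm
  · have hm := s.min'_mem h2
    by_cases hT : s.min' h2 ∈ T
    · have heq : s.min' h2 = t₀ :=
        le_antisymm (Finset.min'_le _ _ ht₀s) (hmin _ hT)
      rw [heq]
      exact Finset.min'_le _ _ (Finset.mem_union_right _ (Finset.mem_singleton_self _))
    · exact Finset.min'_le _ _ (Finset.mem_union_left _ (Finset.mem_sdiff.mpr ⟨hm, hT⟩))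
  · apply Finset.le_min'
    intro y hy
    rcases Finset.mem_union.mp hy with h | h
    · exact Finset.min'_le _ _ (Finset.mem_sdiff.mp h).1
    · rw [Finset.mem_singleton.mp h]
      exact Finset.min'_le _ _ ht₀s

theorem KH.min'_union_T {s : Finset (Fin N)} (ht₀s : t₀ ∈ s)
    (hmin : ∀ l ∈ T, t₀ ≤ l)
    (h1 : (s ∪ T).Nonempty) (h2 : s.Nonempty) :
    (s ∪ T).min' h1 = s.min' h2 := by
  apply le_antisymm
  · exact Finset.min'_le _ _ (Finset.mem_union_left _ (s.min'_mem h2))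
  · apply Finset.le_min'
    intro y hy
    rcases Finset.mem_union.mp hy with h | h
    · exact Finset.min'_le _ _ h
    · exact (Finset.min'_le _ _ ht₀s).trans (hmin y h)
end KHUnexpand
section KHGlue
variable {G : Type*} [CommGroup G] {VV : Type*} [AddCommGroup VV] [Module ℂ VV]
variable {N : ℕ}

theorem KH.glued_isFGForest (ρ : Representation ℂ G VV) {K H : Subgroup G}
    (hHK : H < K) (hKtop : K ≠ ⊤)
    {T : Finset (Fin N)} {t₀ : Fin N} (ht₀T : t₀ ∈ T) (hmin : ∀ l ∈ T, t₀ ≤ l)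
    {A B : Set (FVertex N G)} {w : FVertex N G}
    (hA : IsFGForest ρ A) (hB : IsFGForest ρ B)
    (hAlab : ∀ a ∈ A, a.label = K) (hBlab : ∀ b ∈ B, b.label = H)
    (hAleaves : ∀ a ∈ A, a.leaves ⊆ Tᶜ ∪ {t₀})
    (hBleaves : ∀ b ∈ B, b.leaves ⊆ T)
    (hw : w ∈ B) (hwl : w.leaves = T)
    (hwroot : ∀ b ∈ B, b = w ∨ b.below w) :
    IsFGForest ρ (KH.expandV T t₀ w.coset '' A ∪ B) := by
  obtain ⟨a1, a2, a3, a4, a5, a6, a7, a8, a9, a10, a11, a12, a13⟩ := id hA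
  obtain ⟨b1, b2, b3, b4, b5, b6, b7, b8, b9, b10, b11, b12, b13⟩ := id hB
  set E := KH.expandV T t₀ w.coset with hE
  have hKbot : (⊥ : Subgroup G) < K := bot_le.trans_lt hHK
  have hHtop : H ≠ ⊤ := (hHK.trans_le le_top).ne
  -- the root coset of the H-tree at its smallest leaf is eH
  have hwne : w.leaves.Nonempty := ⟨t₀, hwl ▸ ht₀T⟩
  have hwminT : w.leaves.min' hwne = t₀ := by
    apply le_antisymm
    · exact Finset.min'_le _ _ (hwl ▸ ht₀T)
    · exact hmin _ (hwl ▸ w.leaves.min'_mem hwne)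
  have hwt₀ : w.coset t₀ = (H : Set G) := by
    have := b13 w hw hwne
    rw [hwminT, hBlab w hw] at this
    exact this
  -- coset shape of A-vertices
  have h10K : ∀ v ∈ A, ∀ l ∈ v.leaves, ∃ a : G, v.coset l = a • (K : Set G) := by
    intro v hv l hl
    obtain ⟨a, ha⟩ := a10 v hv l hl
    exact ⟨a, by rwa [hAlab v hv] at ha⟩
  have hUE : ∀ v ∈ A, KH.unexpandV T t₀ (E v) = v := by
    intro v hv
    exact KH.unexpandV_expandV ht₀T hwt₀ hHK.le (hAleaves v hv)
      (fun ht => h10K v hv t₀ ht) (a11 v hv)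
  have hEinj : ∀ v ∈ A, ∀ v' ∈ A, E v = E v' → v = v' := by
    intro v hv v' hv' h
    rw [← hUE v hv, ← hUE v' hv', h]
  have hEbelow : ∀ v ∈ A, ∀ v' ∈ A, ((E v).below (E v') ↔ v.below v') :=
    fun v hv v' hv' => KH.expandV_below_iff ht₀T (hAleaves v hv) (hAleaves v' hv')
  have hEleavesSup : ∀ v : FVertex N G, v.leaves ⊆ (E v).leaves := by
    intro v
    by_cases h : t₀ ∈ v.leaves
    · rw [hE, KH.expandV_leaves_pos h]
      exact Finset.subset_union_left
    · rw [hE, KH.expandV_neg h]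
  have hEne : ∀ v ∈ A, (E v).leaves.Nonempty := by
    intro v hv
    obtain ⟨l, hl⟩ := a3 v hv
    exact ⟨l, hEleavesSup v hl⟩
  have hElabel : ∀ v ∈ A, (E v).label = K := by
    intro v hv
    rw [hE, KH.expandV_label, hAlab v hv]
  -- leaves of expanded vertices
  have hEleavesT : ∀ v ∈ A, t₀ ∈ v.leaves → (E v).leaves = v.leaves ∪ T :=
    fun v _ h => KH.expandV_leaves_pos h
  have hEid : ∀ v : FVertex N G, t₀ ∉ v.leaves → E v = v :=
    fun v h => KH.expandV_neg h
  have hAdisj : ∀ v ∈ A, t₀ ∉ v.leaves → Disjoint v.leaves T := by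
    intro v hv h
    rw [Finset.disjoint_left]
    intro l hl hlT
    have := Finset.mem_singleton.mp (KH.leaves_inter_T (hAleaves v hv)
      (Finset.mem_inter.mpr ⟨hl, hlT⟩))
    exact h (this ▸ hl)
  -- cross `below` facts
  have hcross1 : ∀ b ∈ B, ∀ v ∈ A, t₀ ∈ v.leaves → b.below (E v) := by
    intro b hb v hv ht
    have hsub : b.leaves ⊆ (E v).leaves := by
      rw [hEleavesT v hv ht]
      exact (hBleaves b hb).trans Finset.subset_union_right
    by_cases heq : b.leaves = (E v).leaves
    · refine KH.below_iff.mpr (Or.inr ⟨heq, ?_⟩)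
      rw [hBlab b hb, hElabel v hv]
      exact hHK
    · exact KH.below_iff.mpr (Or.inl (Finset.ssubset_iff_subset_ne.mpr ⟨hsub, heq⟩))
  have hcross2 : ∀ b ∈ B, ∀ v ∈ A, ¬ (E v).below b := by
    intro b hb v hv hbel
    have hsub : (E v).leaves ⊆ b.leaves := KH.below_leaves_subset hbel
    by_cases ht : t₀ ∈ v.leaves
    · have h1 : (E v).leaves = b.leaves := by
        apply Finset.Subset.antisymm hsub
        rw [hEleavesT v hv ht]
        exact (hBleaves b hb).trans Finset.subset_union_right
      rcases KH.below_iff.mp hbel with hss | ⟨heq, hlt⟩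
      · rw [h1] at hss
        exact (ssubset_irrefl _) hss
      · rw [hElabel v hv, hBlab b hb] at hlt
        exact absurd (hlt.trans hHK) (lt_irrefl K)
    · rw [hEid v ht] at hsub
      obtain ⟨l, hl⟩ := a3 v hv
      have hlT : l ∈ T := hBleaves b hb (hsub hl)
      have := Finset.mem_singleton.mp (KH.leaves_inter_T (hAleaves v hv)
        (Finset.mem_inter.mpr ⟨hl, hlT⟩))
      exact ht (this ▸ hl)
  have hcross3 : ∀ b ∈ B, ∀ v ∈ A, t₀ ∉ v.leaves → ¬ b.below (E v) := by
    intro b hb v hv ht hbel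
    rw [hEid v ht] at hbel
    have hsub := KH.below_leaves_subset hbel
    obtain ⟨l, hl⟩ := b3 b hb
    have hlT : l ∈ T := hBleaves b hb hl
    have := Finset.mem_singleton.mp (KH.leaves_inter_T (hAleaves v hv)
      (Finset.mem_inter.mpr ⟨hsub hl, hlT⟩))
    exact ht (this ▸ hsub hl)
  -- direct children restrict
  have hdcA : ∀ v ∈ A, ∀ v' ∈ A, IsDirectChild (E '' A ∪ B) (E v') (E v) →
      IsDirectChild A v' v := by
    rintro v hv v' hv' ⟨h1, h2⟩
    refine ⟨(hEbelow v' hv' v hv).mp h1, ?_⟩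
    rintro ⟨u, hu, hu1, hu2⟩
    exact h2 ⟨E u, Or.inl ⟨u, hu, rfl⟩, (hEbelow v' hv' u hu).mpr hu1,
      (hEbelow u hu v hv).mpr hu2⟩
  have hdcB : ∀ b ∈ B, ∀ b' ∈ B, IsDirectChild (E '' A ∪ B) b' b →
      IsDirectChild B b' b := by
    rintro b hb b' hb' ⟨h1, h2⟩
    exact ⟨h1, fun ⟨u, hu, hu1, hu2⟩ => h2 ⟨u, Or.inr hu, hu1, hu2⟩⟩
  refine ⟨(a1.image E).union b1, (a2.image E).mono Set.subset_union_left,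
    ?_, ?_, ?_, ?_, ?_, ?_, ?_, ?_, ?_, ?_, ?_⟩
  -- (3) nonempty leaves
  · rintro u (⟨v, hv, rfl⟩ | hu)
    exacts [hEne v hv, b3 u hu]
  -- (4) closed labels
  · rintro u (⟨v, hv, rfl⟩ | hu)
    · rw [hE, KH.expandV_label]
      exact a4 v hv
    · exact b4 u hu
  -- (5) laminar
  · rintro u (⟨v, hv, rfl⟩ | hu) u' (⟨v', hv', rfl⟩ | hu') hint
    · by_cases ht : t₀ ∈ v.leaves <;> by_cases ht' : t₀ ∈ v'.leaves
      · have : (v.leaves ∩ v'.leaves).Nonempty := ⟨t₀, Finset.mem_inter.mpr ⟨ht, ht'⟩⟩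
        rcases a5 v hv v' hv' this with h | h
        · exact Or.inl ((KH.expandV_leaves_subset_iff ht₀T (hAleaves v hv)
            (hAleaves v' hv')).mpr h)
        · exact Or.inr ((KH.expandV_leaves_subset_iff ht₀T (hAleaves v' hv')
            (hAleaves v hv)).mpr h)
      · -- t₀ ∈ v, t₀ ∉ v' : E v' = v' with leaves away from T
        rw [hEid v' ht'] at hint ⊢
        obtain ⟨x, hx⟩ := hint
        rw [Finset.mem_inter, hEleavesT v hv ht] at hx
        have hxv : x ∈ v.leaves := by
          rcases Finset.mem_union.mp hx.1 with h | h
          · exact h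
          · exact absurd hx.2 (Finset.disjoint_right.mp (hAdisj v' hv' ht') h)
        rcases a5 v hv v' hv' ⟨x, Finset.mem_inter.mpr ⟨hxv, hx.2⟩⟩ with h | h
        · exact absurd (h ht) ht'
        · exact Or.inr (h.trans (hEleavesSup v))
      · rw [hEid v ht] at hint ⊢
        obtain ⟨x, hx⟩ := hint
        rw [Finset.mem_inter, hEleavesT v' hv' ht'] at hx
        have hxv : x ∈ v'.leaves := by
          rcases Finset.mem_union.mp hx.2 with h | h
          · exact h
          · exact absurd hx.1 (Finset.disjoint_right.mp (hAdisj v hv ht) h)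
        rcases a5 v hv v' hv' ⟨x, Finset.mem_inter.mpr ⟨hx.1, hxv⟩⟩ with h | h
        · exact Or.inl (h.trans (hEleavesSup v'))
        · exact absurd (h ht') ht
      · rw [hEid v ht, hEid v' ht'] at hint ⊢
        exact a5 v hv v' hv' hint
    · -- E v vs b
      by_cases ht : t₀ ∈ v.leaves
      · refine Or.inr ?_
        rw [hEleavesT v hv ht]
        exact (hBleaves u' hu').trans Finset.subset_union_right
      · exfalso
        rw [hEid v ht] at hint
        obtain ⟨x, hx⟩ := hint
        rw [Finset.mem_inter] at hx
        exact Finset.disjoint_right.mp (hAdisj v hv ht) (hBleaves u' hu' hx.2) hx.1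
    · by_cases ht : t₀ ∈ v'.leaves
      · refine Or.inl ?_
        rw [hEleavesT v' hv' ht]
        exact (hBleaves u hu).trans Finset.subset_union_right
      · exfalso
        rw [hEid v' ht] at hint
        obtain ⟨x, hx⟩ := hint
        rw [Finset.mem_inter] at hx
        exact Finset.disjoint_right.mp (hAdisj v' hv' ht) (hBleaves u hu hx.1) hx.2
    · exact b5 u hu u' hu' hint
  -- (6) strict inclusion implies label inclusion
  · rintro u (⟨v, hv, rfl⟩ | hu) u' (⟨v', hv', rfl⟩ | hu') hss
    · rw [KH.conjLE_iff, hElabel v hv, hElabel v' hv']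
    · -- child b = u', parent E v : impossible premise? no: here u = E v is parent, u' = b child
      -- goal : ConjLE u'.label (E v).label with u'.leaves ⊂ (E v).leaves
      rw [KH.conjLE_iff, hElabel v hv, hBlab u' hu']
      exact hHK.le
    · -- child E v', parent b : premise impossible
      exfalso
      have hsub := hss.subset
      by_cases ht : t₀ ∈ v'.leaves
      · have h1 : T ⊆ (E v').leaves := by
          rw [hEleavesT v' hv' ht]
          exact Finset.subset_union_right
        have : (E v').leaves = u.leaves :=
          Finset.Subset.antisymm hsub ((hBleaves u hu).trans h1)
        rw [this] at hss
        exact (ssubset_irrefl _) hss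
      · rw [hEid v' ht] at hsub
        obtain ⟨l, hl⟩ := a3 v' hv'
        have hlT : l ∈ T := hBleaves u hu (hsub hl)
        have := Finset.mem_singleton.mp (KH.leaves_inter_T (hAleaves v' hv')
          (Finset.mem_inter.mpr ⟨hl, hlT⟩))
        exact ht (this ▸ hl)
    · exact b6 u hu u' hu' hss
  -- (7) same leaves, distinct: labels comparable
  · rintro u (⟨v, hv, rfl⟩ | hu) u' (⟨v', hv', rfl⟩ | hu') hne heq
    · refine a7 v hv v' hv' (fun hc => hne (by rw [hc])) ?_ |>.imp ?_ ?_
      · exact (KH.expandV_leaves_eq_iff ht₀T (hAleaves v hv) (hAleaves v' hv')).mp heq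
      · intro h
        rwa [hE, KH.expandV_label, KH.expandV_label]
      · intro h
        rwa [hE, KH.expandV_label, KH.expandV_label]
    · -- E v and b with equal leaves: then H < K
      refine Or.inr ?_
      rw [KH.conjLT_iff, hBlab u' hu', hElabel v hv]
      exact hHK
    · refine Or.inl ?_
      rw [KH.conjLT_iff, hBlab u hu, hElabel v' hv']
      exact hHK
    · exact b7 u hu u' hu' hne heq
  -- (8) one-leaf vertices
  · rintro u (⟨v, hv, rfl⟩ | hu) l hl hnc
    · rw [hElabel v hv]
      exact hKbot.ne'
    · intro hbot
      by_cases hHbot : H = ⊥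
      · refine b8 u hu l hl ?_ hbot
        rintro ⟨x, hx, h1, h2, h3⟩
        exact hnc ⟨x, Or.inr hx, h1, h2, h3⟩
      · exact hHbot (by rw [← hBlab u hu, hbot])
  -- (9) G-labelled vertices
  · rintro u (⟨v, hv, rfl⟩ | hu) u' hu' hvt hwt
    · exact absurd (by rwa [hElabel v hv] at hvt) hKtop
    · exact absurd (by rwa [hBlab u hu] at hvt) hHtop
  -- (10) cosets are cosets
  · rintro u (⟨v, hv, rfl⟩ | hu) l hl
    · by_cases ht : t₀ ∈ v.leaves
      · by_cases hlT : l ∈ T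
        · obtain ⟨x, hx⟩ := b10 w hw l (hwl ▸ hlT)
          obtain ⟨y, hy⟩ := h10K v hv t₀ ht
          rw [hE, KH.expandV_coset_mem ht hlT, hx, hy, hBlab w hw,
            KH.smul_coset_mul hHK.le, KH.expandV_label, hAlab v hv]
          exact ⟨x * y, rfl⟩
        · have hlv : l ∈ v.leaves := by
            rw [hEleavesT v hv ht, Finset.mem_union] at hl
            rcases hl with h | h
            exacts [h, absurd h hlT]
          obtain ⟨x, hx⟩ := a10 v hv l hlv
          rw [hE, KH.expandV_coset_notMem v hlT, KH.expandV_label]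
          exact ⟨x, hx⟩
      · rw [hEid v ht] at hl ⊢
        exact a10 v hv l hl
    · exact b10 u hu l hl
  -- (11) empty cosets off the leaves
  · rintro u (⟨v, hv, rfl⟩ | hu) l hl
    · by_cases ht : t₀ ∈ v.leaves
      · have hlT : l ∉ T := by
          intro hc
          exact hl ((hEleavesT v hv ht) ▸ Finset.mem_union_right _ hc)
        have hlv : l ∉ v.leaves := by
          intro hc
          exact hl (hEleavesSup v hc)
        rw [hE, KH.expandV_coset_notMem v hlT]
        exact a11 v hv l hlv
      · rw [hEid v ht] at hl ⊢
        exact a11 v hv l hl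
    · exact b11 u hu l hl
  -- (12) edges
  · rintro u (⟨v, hv, rfl⟩ | hu) u' (⟨v', hv', rfl⟩ | hu') hdc
    · -- K-K edge
      obtain ⟨a, ha1, ha2, ha3⟩ := a12 v hv v' hv' (hdcA v hv v' hv' hdc)
      rw [KH.map_conj] at ha1
      have hsubl : v'.leaves ⊆ v.leaves :=
        KH.below_leaves_subset ((hEbelow v' hv' v hv).mp hdc.1)
      refine ⟨a, ?_, ?_, ?_⟩
      · rw [KH.map_conj, hE, KH.expandV_label, KH.expandV_label]
        exact ha1
      · intro l hl
        by_cases ht' : t₀ ∈ v'.leaves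
        · have ht : t₀ ∈ v.leaves := hsubl ht'
          rw [hEleavesT v' hv' ht', Finset.mem_union] at hl
          by_cases hlT : l ∈ T
          · rw [hE, KH.expandV_coset_mem ht hlT, KH.expandV_coset_mem ht' hlT,
              KH.expandV_label, ha2 t₀ ht', mul_assoc]
          · have hlv' : l ∈ v'.leaves := by
              rcases hl with h | h
              exacts [h, absurd h hlT]
            rw [hE, KH.expandV_coset_notMem v hlT, KH.expandV_coset_notMem v' hlT,
              KH.expandV_label]
            exact ha2 l hlv'
        · rw [hEid v' ht'] at hl ⊢
          have hlT : l ∉ T := by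
            intro hc
            have := Finset.mem_singleton.mp (KH.leaves_inter_T (hAleaves v' hv')
              (Finset.mem_inter.mpr ⟨hl, hc⟩))
            exact ht' (this ▸ hl)
          rw [hE, KH.expandV_coset_notMem v hlT, KH.expandV_label]
          exact ha2 l hl
      · intro hvne hminmem
        rw [hE, KH.expandV_label]
        by_cases ht : t₀ ∈ v.leaves
        · have hvne' : v.leaves.Nonempty := a3 v hv
          have hminEq : (E v).leaves.min' hvne = v.leaves.min' hvne' :=
            KH.expandV_min' ht₀T hmin hvne' hvne
          rw [hminEq] at hminmem
          apply ha3 hvne'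
          by_cases ht' : t₀ ∈ v'.leaves
          · rw [hEleavesT v' hv' ht', Finset.mem_union] at hminmem
            rcases hminmem with h | h
            · exact h
            · have := Finset.mem_singleton.mp (KH.leaves_inter_T (hAleaves v hv)
                (Finset.mem_inter.mpr ⟨v.leaves.min'_mem hvne', h⟩))
              rw [this]
              exact ht'
          · rwa [hEid v' ht'] at hminmem
        · have hidv := hEid v ht
          have ht' : t₀ ∉ v'.leaves := fun hc => ht (hsubl hc)
          rw [hEid v' ht'] at hminmem
          -- (E v).leaves.min' hvne with E v = v
          simp only [hidv] at hminmem
          exact ha3 _ hminmem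
    · -- K vertex with H child: must be the root of the H-tree
      have hbel := hdc.1
      have ht : t₀ ∈ v.leaves := by
        by_contra ht
        exact hcross3 u' hu' v hv ht hbel
      have huw : u' = w := by
        rcases hwroot u' hu' with h | h
        · exact h
        · exfalso
          exact hdc.2 ⟨w, Or.inr hw, h, hcross1 w hw v hv ht⟩
      obtain ⟨a, ha⟩ := h10K v hv t₀ ht
      refine ⟨a, ?_, ?_, ?_⟩
      · rw [KH.map_conj, hE, KH.expandV_label, hBlab u' hu', hAlab v hv]
        exact hHK.le
      · intro l hl
        rw [huw] at hl
        have hlT : l ∈ T := hwl ▸ hl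
        rw [huw, hE, KH.expandV_coset_mem ht hlT, KH.expandV_label, hAlab v hv, ha]
      · intro hvne hminmem
        rw [huw] at hminmem
        rw [hE, KH.expandV_label, hAlab v hv]
        have hvne' : v.leaves.Nonempty := a3 v hv
        have hminEq : (E v).leaves.min' hvne = v.leaves.min' hvne' :=
          KH.expandV_min' ht₀T hmin hvne' hvne
        rw [hminEq, hwl] at hminmem
        have hm0 : v.leaves.min' hvne' = t₀ := Finset.mem_singleton.mp
          (KH.leaves_inter_T (hAleaves v hv)
            (Finset.mem_inter.mpr ⟨v.leaves.min'_mem hvne', hminmem⟩))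
        have h13 := a13 v hv hvne'
        rw [hm0, ha, hAlab v hv] at h13
        exact KH.smul_coset_eq_self h13
    · exact absurd hdc.1 (hcross2 u hu v' hv')
    · exact b12 u hu u' hu' (hdcB u hu u' hu' hdc)
  -- (13) coset at the smallest leaf
  · rintro u (⟨v, hv, rfl⟩ | hu) hvne
    · by_cases ht : t₀ ∈ v.leaves
      · have hvne' : v.leaves.Nonempty := a3 v hv
        have hminEq : (E v).leaves.min' hvne = v.leaves.min' hvne' :=
          KH.expandV_min' ht₀T hmin hvne' hvne
        rw [hminEq]
        by_cases hmT : v.leaves.min' hvne' ∈ T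
        · have hm0 : v.leaves.min' hvne' = t₀ := Finset.mem_singleton.mp
            (KH.leaves_inter_T (hAleaves v hv)
              (Finset.mem_inter.mpr ⟨v.leaves.min'_mem hvne', hmT⟩))
          rw [hm0, hE, KH.expandV_coset_t₀' ht₀T hwt₀ hHK.le ht (h10K v hv t₀ ht),
            KH.expandV_label]
          have := a13 v hv hvne'
          rwa [hm0] at this
        · rw [hE, KH.expandV_coset_notMem v hmT, KH.expandV_label]
          exact a13 v hv hvne'
      · have hid := hEid v ht
        simp only [hid]
        exact a13 v hv _
    · exact b13 u hu hvne
end KHGlue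
section KHUnglue
variable {G : Type*} [CommGroup G] {VV : Type*} [AddCommGroup VV] [Module ℂ VV]
variable {N : ℕ} {T : Finset (Fin N)} {t₀ : Fin N}

theorem KH.unexpandV_leaves_subset_iff (ht₀T : t₀ ∈ T) {v v' : FVertex N G}
    (hc : T ⊆ v.leaves ∨ Disjoint v.leaves T)
    (hc' : T ⊆ v'.leaves ∨ Disjoint v'.leaves T) :
    (KH.unexpandV T t₀ v).leaves ⊆ (KH.unexpandV T t₀ v').leaves ↔
      v.leaves ⊆ v'.leaves := by
  rcases hc with hs | hd <;> rcases hc' with hs' | hd'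
  · rw [KH.unexpandV_leaves_pos hs, KH.unexpandV_leaves_pos hs']
    constructor
    · intro hsub l hl
      by_cases hlT : l ∈ T
      · exact hs' hlT
      · have := hsub (Finset.mem_union_left _ (Finset.mem_sdiff.mpr ⟨hl, hlT⟩))
        rcases Finset.mem_union.mp this with h | h
        · exact (Finset.mem_sdiff.mp h).1
        · exact hs' ((Finset.mem_singleton.mp h) ▸ ht₀T)
    · intro hsub l hl
      rcases Finset.mem_union.mp hl with h | h
      · rw [Finset.mem_sdiff] at h
        exact Finset.mem_union_left _ (Finset.mem_sdiff.mpr ⟨hsub h.1, h.2⟩)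
      · exact Finset.mem_union_right _ h
  · rw [KH.unexpandV_leaves_pos hs, KH.unexpandV_neg (fun hcc =>
      Finset.disjoint_right.mp hd' ht₀T (hcc ht₀T))]
    constructor
    · intro hsub
      exact absurd (hsub (Finset.mem_union_right _ (Finset.mem_singleton_self t₀)))
        (Finset.disjoint_right.mp hd' ht₀T)
    · intro hsub
      exact absurd (hsub (hs ht₀T)) (Finset.disjoint_right.mp hd' ht₀T)
  · rw [KH.unexpandV_neg (fun hcc => Finset.disjoint_right.mp hd ht₀T (hcc ht₀T)),
      KH.unexpandV_leaves_pos hs']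
    constructor
    · intro hsub l hl
      have := hsub hl
      rcases Finset.mem_union.mp this with h | h
      · exact (Finset.mem_sdiff.mp h).1
      · exact hs' ((Finset.mem_singleton.mp h) ▸ ht₀T)
    · intro hsub l hl
      have hlT : l ∉ T := Finset.disjoint_left.mp hd hl
      exact Finset.mem_union_left _ (Finset.mem_sdiff.mpr ⟨hsub hl, hlT⟩)
  · rw [KH.unexpandV_neg (fun hcc => Finset.disjoint_right.mp hd ht₀T (hcc ht₀T)),
      KH.unexpandV_neg (fun hcc => Finset.disjoint_right.mp hd' ht₀T (hcc ht₀T))]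

theorem KH.unexpandV_leaves_eq_iff (ht₀T : t₀ ∈ T) {v v' : FVertex N G}
    (hc : T ⊆ v.leaves ∨ Disjoint v.leaves T)
    (hc' : T ⊆ v'.leaves ∨ Disjoint v'.leaves T) :
    (KH.unexpandV T t₀ v).leaves = (KH.unexpandV T t₀ v').leaves ↔
      v.leaves = v'.leaves := by
  constructor
  · intro h
    exact Finset.Subset.antisymm
      ((KH.unexpandV_leaves_subset_iff ht₀T hc hc').mp h.le)
      ((KH.unexpandV_leaves_subset_iff ht₀T hc' hc).mp h.ge)
  · intro h
    exact Finset.Subset.antisymm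
      ((KH.unexpandV_leaves_subset_iff ht₀T hc hc').mpr h.le)
      ((KH.unexpandV_leaves_subset_iff ht₀T hc' hc).mpr h.ge)

theorem KH.unexpandV_below_iff (ht₀T : t₀ ∈ T) {v v' : FVertex N G}
    (hc : T ⊆ v.leaves ∨ Disjoint v.leaves T)
    (hc' : T ⊆ v'.leaves ∨ Disjoint v'.leaves T) :
    (KH.unexpandV T t₀ v).below (KH.unexpandV T t₀ v') ↔ v.below v' := by
  rw [KH.below_iff, KH.below_iff, Finset.ssubset_iff_subset_ne,
    Finset.ssubset_iff_subset_ne, KH.unexpandV_leaves_subset_iff ht₀T hc hc']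
  simp only [ne_eq, KH.unexpandV_leaves_eq_iff ht₀T hc hc', KH.unexpandV_label]

theorem KH.unexpandV_min' (ht₀T : t₀ ∈ T) (hmin : ∀ l ∈ T, t₀ ≤ l)
    {v : FVertex N G} (hsub : T ⊆ v.leaves)
    (h1 : (KH.unexpandV T t₀ v).leaves.Nonempty) (h2 : v.leaves.Nonempty) :
    (KH.unexpandV T t₀ v).leaves.min' h1 = v.leaves.min' h2 := by
  apply le_antisymm
  · apply Finset.min'_le
    rw [KH.unexpandV_leaves_pos hsub]
    by_cases hT : v.leaves.min' h2 ∈ T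
    · have heq : v.leaves.min' h2 = t₀ :=
        le_antisymm (Finset.min'_le _ _ (hsub ht₀T)) (hmin _ hT)
      rw [heq]
      exact Finset.mem_union_right _ (Finset.mem_singleton_self t₀)
    · exact Finset.mem_union_left _ (Finset.mem_sdiff.mpr ⟨v.leaves.min'_mem h2, hT⟩)
  · apply Finset.le_min'
    intro y hy
    rw [KH.unexpandV_leaves_pos hsub] at hy
    rcases Finset.mem_union.mp hy with h | h
    · exact Finset.min'_le _ _ (Finset.mem_sdiff.mp h).1
    · rw [Finset.mem_singleton.mp h]
      exact Finset.min'_le _ _ (hsub ht₀T)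

theorem KH.unglued_isFGForest (ρ : Representation ℂ G VV) {K H : Subgroup G}
    (hHK : H < K) (hKtop : K ≠ ⊤) (ht₀T : t₀ ∈ T) (hmin : ∀ l ∈ T, t₀ ≤ l)
    {F : Set (FVertex N G)} (hF : IsFGForest ρ F) {w : FVertex N G}
    (hw : w ∈ F) (hwlab : w.label = H) (hwl : w.leaves = T)
    (hwmax : ∀ u ∈ F, u.label = H → u = w ∨ u.below w)
    (hlabKH : ∀ u ∈ F, u.label = K ∨ u.label = H)
    (hKne : ∃ u ∈ F, u.label = K) :
    IsFGForest ρ (KH.unexpandV T t₀ '' {u | u ∈ F ∧ u.label = K}) := by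
  obtain ⟨f1, f2, f3, f4, f5, f6, f7, f8, f9, f10, f11, f12, f13⟩ := id hF
  set Kp := {u | u ∈ F ∧ u.label = K} with hKp
  set U := KH.unexpandV T t₀ (G := G) with hU
  have hKbot : (⊥ : Subgroup G) < K := bot_le.trans_lt hHK
  have hBleaves : ∀ u ∈ F, u.label = H → u.leaves ⊆ T := by
    intro u hu hl
    rcases hwmax u hu hl with rfl | hb
    · exact hwl ▸ Finset.Subset.refl _
    · exact hwl ▸ KH.below_leaves_subset hb
  have hKT : ∀ v ∈ Kp, T ⊆ v.leaves ∨ Disjoint v.leaves T := by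
    rintro v ⟨hv, hvlab⟩
    by_cases hint : (v.leaves ∩ w.leaves).Nonempty
    · rcases f5 v hv w hw hint with hsub | hsub
      · by_cases heq : v.leaves = w.leaves
        · exact Or.inl (heq ▸ hwl ▸ Finset.Subset.refl _)
        · exfalso
          have := f6 w hw v hv (Finset.ssubset_iff_subset_ne.mpr ⟨hsub, heq⟩)
          rw [KH.conjLE_iff, hvlab, hwlab] at this
          exact absurd (hHK.trans_le this) (lt_irrefl H)
      · exact Or.inl (hwl ▸ hsub)
    · refine Or.inr (Finset.disjoint_left.mpr fun l hl hlT => ?_)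
      exact hint ⟨l, Finset.mem_inter.mpr ⟨hl, hwl ▸ hlT⟩⟩
  have ht₀mem : ∀ v ∈ Kp, T ⊆ v.leaves → t₀ ∈ v.leaves := fun v _ h => h ht₀T
  refine ⟨(f1.subset (fun u hu => hu.1)).image U, ?_, ?_, ?_, ?_, ?_, ?_, ?_, ?_, ?_, ?_, ?_, ?_⟩
  · obtain ⟨u, hu, hul⟩ := hKne
    exact ⟨U u, ⟨u, ⟨hu, hul⟩, rfl⟩⟩
  -- (3)
  · rintro _ ⟨v, hv, rfl⟩
    rcases hKT v hv with hs | hd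
    · exact ⟨t₀, KH.unexpandV_t₀_mem hs⟩
    · rw [hU, KH.unexpandV_neg (fun hcc => Finset.disjoint_right.mp hd ht₀T (hcc ht₀T))]
      exact f3 v hv.1
  -- (4)
  · rintro _ ⟨v, hv, rfl⟩
    rw [hU, KH.unexpandV_label]
    exact f4 v hv.1
  -- (5)
  · rintro _ ⟨v, hv, rfl⟩ _ ⟨v', hv', rfl⟩ hint
    have hvint : (v.leaves ∩ v'.leaves).Nonempty := by
      obtain ⟨x, hx⟩ := hint
      rw [Finset.mem_inter] at hx
      rcases hKT v hv with hs | hd <;> rcases hKT v' hv' with hs' | hd'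
      · exact ⟨t₀, Finset.mem_inter.mpr ⟨hs ht₀T, hs' ht₀T⟩⟩
      · rw [hU, KH.unexpandV_leaves_pos hs] at hx
        rw [KH.unexpandV_neg (fun hcc =>
          Finset.disjoint_right.mp hd' ht₀T (hcc ht₀T))] at hx
        rcases Finset.mem_union.mp hx.1 with h | h
        · exact ⟨x, Finset.mem_inter.mpr ⟨(Finset.mem_sdiff.mp h).1, hx.2⟩⟩
        · exact absurd ((Finset.mem_singleton.mp h) ▸ hx.2)
            (Finset.disjoint_right.mp hd' ht₀T)
      · rw [hU, KH.unexpandV_leaves_pos hs'] at hx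
        rw [KH.unexpandV_neg (fun hcc =>
          Finset.disjoint_right.mp hd ht₀T (hcc ht₀T))] at hx
        rcases Finset.mem_union.mp hx.2 with h | h
        · exact ⟨x, Finset.mem_inter.mpr ⟨hx.1, (Finset.mem_sdiff.mp h).1⟩⟩
        · exact absurd ((Finset.mem_singleton.mp h) ▸ hx.1)
            (Finset.disjoint_right.mp hd ht₀T)
      · rw [hU, KH.unexpandV_neg (fun hcc =>
          Finset.disjoint_right.mp hd ht₀T (hcc ht₀T)),
          KH.unexpandV_neg (fun hcc =>
          Finset.disjoint_right.mp hd' ht₀T (hcc ht₀T))] at hx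
        exact ⟨x, Finset.mem_inter.mpr hx⟩
    rcases f5 v hv.1 v' hv'.1 hvint with h | h
    · exact Or.inl ((KH.unexpandV_leaves_subset_iff ht₀T (hKT v hv) (hKT v' hv')).mpr h)
    · exact Or.inr ((KH.unexpandV_leaves_subset_iff ht₀T (hKT v' hv') (hKT v hv)).mpr h)
  -- (6)
  · rintro _ ⟨v, hv, rfl⟩ _ ⟨v', hv', rfl⟩ hss
    rw [KH.conjLE_iff, hU, KH.unexpandV_label, KH.unexpandV_label, hv.2, hv'.2]
  -- (7)
  · rintro _ ⟨v, hv, rfl⟩ _ ⟨v', hv', rfl⟩ hne heq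
    refine (f7 v hv.1 v' hv'.1 (fun hc => hne (by rw [hc]))
      ((KH.unexpandV_leaves_eq_iff ht₀T (hKT v hv) (hKT v' hv')).mp heq)).imp ?_ ?_
    · intro h
      rwa [hU, KH.unexpandV_label, KH.unexpandV_label]
    · intro h
      rwa [hU, KH.unexpandV_label, KH.unexpandV_label]
  -- (8)
  · rintro _ ⟨v, hv, rfl⟩ l hl hnc
    rw [hU, KH.unexpandV_label, hv.2]
    exact hKbot.ne'
  -- (9)
  · rintro _ ⟨v, hv, rfl⟩ _ ⟨v', hv', rfl⟩ hvt hwt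
    exfalso
    rw [hU, KH.unexpandV_label, hv.2] at hvt
    exact hKtop hvt
  -- (10)
  · rintro _ ⟨v, hv, rfl⟩ l hl
    rcases hKT v hv with hs | hd
    · rw [hU, KH.unexpandV_leaves_pos hs] at hl
      rw [hU, KH.unexpandV_label]
      rcases Finset.mem_union.mp hl with h | h
      · rw [KH.unexpandV_coset_notMem (Finset.mem_sdiff.mp h).2]
        exact f10 v hv.1 l (Finset.mem_sdiff.mp h).1
      · rw [Finset.mem_singleton.mp h, KH.unexpandV_coset_t₀ hs]
        exact f10 v hv.1 t₀ (hs ht₀T)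
    · rw [hU, KH.unexpandV_neg (fun hcc =>
        Finset.disjoint_right.mp hd ht₀T (hcc ht₀T))] at hl ⊢
      exact f10 v hv.1 l hl
  -- (11)
  · rintro _ ⟨v, hv, rfl⟩ l hl
    rcases hKT v hv with hs | hd
    · rw [hU, KH.unexpandV_leaves_pos hs] at hl
      by_cases hlT : l ∈ T \ {t₀}
      · rw [hU, KH.unexpandV_pos hs]
        show (if l ∈ T \ {t₀} then ∅ else v.coset l) = ∅
        rw [if_pos hlT]
      · have hlT' : l ∉ T := by
          intro hc
          rw [Finset.mem_sdiff, Finset.mem_singleton] at hlT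
          push_neg at hlT
          exact hl (Finset.mem_union_right _ (Finset.mem_singleton.mpr (hlT hc)))
        rw [hU, KH.unexpandV_coset_notMem hlT']
        refine f11 v hv.1 l fun hc => ?_
        exact hl (Finset.mem_union_left _ (Finset.mem_sdiff.mpr ⟨hc, hlT'⟩))
    · rw [hU, KH.unexpandV_neg (fun hcc =>
        Finset.disjoint_right.mp hd ht₀T (hcc ht₀T))] at hl ⊢
      exact f11 v hv.1 l hl
  -- (12)
  · rintro _ ⟨v, hv, rfl⟩ _ ⟨v', hv', rfl⟩ hdc
    have hbel : v'.below v :=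
      (KH.unexpandV_below_iff ht₀T (hKT v' hv') (hKT v hv)).mp hdc.1
    have hdcF : IsDirectChild F v' v := by
      refine ⟨hbel, ?_⟩
      rintro ⟨z, hz, hz1, hz2⟩
      rcases hlabKH z hz with hzl | hzl
      · exact hdc.2 ⟨U z, ⟨z, ⟨hz, hzl⟩, rfl⟩,
          (KH.unexpandV_below_iff ht₀T (hKT v' hv') (hKT z ⟨hz, hzl⟩)).mpr hz1,
          (KH.unexpandV_below_iff ht₀T (hKT z ⟨hz, hzl⟩) (hKT v hv)).mpr hz2⟩
      · -- H-vertex strictly between two K-vertices: impossible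
        have hzT : z.leaves ⊆ T := hBleaves z hz hzl
        have hsubz : v'.leaves ⊆ z.leaves := KH.below_leaves_subset hz1
        have hTv' : T ⊆ v'.leaves := by
          rcases hKT v' hv' with h | h
          · exact h
          · exfalso
            obtain ⟨l, hl⟩ := f3 v' hv'.1
            exact Finset.disjoint_left.mp h hl (hzT (hsubz hl))
        have heq : v'.leaves = z.leaves :=
          Finset.Subset.antisymm hsubz (hzT.trans hTv')
        rcases KH.below_iff.mp hz1 with hss | ⟨_, hlt⟩
        · exact (ssubset_irrefl _) (heq ▸ hss)
        · rw [hv'.2, hzl] at hlt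
          exact absurd (hHK.trans hlt) (lt_irrefl H)
    obtain ⟨a, ha1, ha2, ha3⟩ := f12 v hv.1 v' hv'.1 hdcF
    rw [KH.map_conj] at ha1
    refine ⟨a, ?_, ?_, ?_⟩
    · rw [KH.map_conj, hU, KH.unexpandV_label, KH.unexpandV_label]
      exact ha1
    · intro l hl
      rcases hKT v' hv' with hs' | hd'
      · have hs : T ⊆ v.leaves := hs'.trans (KH.below_leaves_subset hbel)
        rw [hU, KH.unexpandV_leaves_pos hs'] at hl
        rw [hU, KH.unexpandV_label]
        rcases Finset.mem_union.mp hl with h | h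
        · have hlT := (Finset.mem_sdiff.mp h).2
          rw [KH.unexpandV_coset_notMem hlT, KH.unexpandV_coset_notMem hlT]
          exact ha2 l (Finset.mem_sdiff.mp h).1
        · rw [Finset.mem_singleton.mp h, KH.unexpandV_coset_t₀ hs,
            KH.unexpandV_coset_t₀ hs']
          exact ha2 t₀ (hs' ht₀T)
      · rw [hU, KH.unexpandV_neg (fun hcc =>
          Finset.disjoint_right.mp hd' ht₀T (hcc ht₀T))] at hl ⊢
        have hlT : l ∉ T := Finset.disjoint_left.mp hd' hl
        rw [KH.unexpandV_label, KH.unexpandV_coset_notMem hlT]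
        exact ha2 l hl
    · intro hvne hminmem
      rw [hU, KH.unexpandV_label]
      rcases hKT v hv with hs | hd
      · have hvne2 : v.leaves.Nonempty := f3 v hv.1
        have hmeq : (U v).leaves.min' hvne = v.leaves.min' hvne2 :=
          KH.unexpandV_min' ht₀T hmin hs hvne hvne2
        rw [hmeq] at hminmem
        apply ha3 hvne2
        rcases hKT v' hv' with hs' | hd'
        · rw [hU, KH.unexpandV_leaves_pos hs'] at hminmem
          rcases Finset.mem_union.mp hminmem with h | h
          · exact (Finset.mem_sdiff.mp h).1
          · rw [Finset.mem_singleton.mp h]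
            exact hs' ht₀T
        · rwa [hU, KH.unexpandV_neg (fun hcc =>
            Finset.disjoint_right.mp hd' ht₀T (hcc ht₀T))] at hminmem
      · have hid : U v = v := KH.unexpandV_neg (fun hcc =>
          Finset.disjoint_right.mp hd ht₀T (hcc ht₀T))
        have hd' : Disjoint v'.leaves T := by
          rcases hKT v' hv' with h | h
          · exact absurd ht₀T (fun hc => Finset.disjoint_left.mp hd
              (KH.below_leaves_subset hbel (h hc)) hc)
          · exact h
        have hid' : U v' = v' := KH.unexpandV_neg (fun hcc =>
          Finset.disjoint_right.mp hd' ht₀T (hcc ht₀T))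
        simp only [hid, hid'] at hminmem ⊢
        exact ha3 _ hminmem
  -- (13)
  · rintro _ ⟨v, hv, rfl⟩ hvne
    rcases hKT v hv with hs | hd
    · have hvne2 : v.leaves.Nonempty := f3 v hv.1
      have hmeq : (U v).leaves.min' hvne = v.leaves.min' hvne2 :=
        KH.unexpandV_min' ht₀T hmin hs hvne hvne2
      rw [hmeq, hU, KH.unexpandV_label]
      by_cases hT : v.leaves.min' hvne2 ∈ T
      · have heq : v.leaves.min' hvne2 = t₀ :=
          le_antisymm (Finset.min'_le _ _ (hs ht₀T)) (hmin _ hT)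
        rw [heq, KH.unexpandV_coset_t₀ hs, ← heq]
        exact f13 v hv.1 hvne2
      · rw [KH.unexpandV_coset_notMem hT]
        exact f13 v hv.1 hvne2
    · have hid : U v = v := KH.unexpandV_neg (fun hcc =>
        Finset.disjoint_right.mp hd ht₀T (hcc ht₀T))
      simp only [hid]
      exact f13 v hv.1 _
end KHUnglue
section KHChain
variable {G : Type*} [CommGroup G] {VV : Type*} [AddCommGroup VV] [Module ℂ VV]
variable {N : ℕ} {T : Finset (Fin N)} {t₀ : Fin N}

theorem KH.B_below_expandV {K H : Subgroup G} (hHK : H < K) {wcos : Fin N → Set G}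
    {v b : FVertex N G} (ht : t₀ ∈ v.leaves) (hbT : b.leaves ⊆ T)
    (hblab : b.label = H) (hvlab : v.label = K) :
    b.below (KH.expandV T t₀ wcos v) := by
  have hsub : b.leaves ⊆ (KH.expandV T t₀ wcos v).leaves := by
    rw [KH.expandV_leaves_pos ht]
    exact hbT.trans Finset.subset_union_right
  by_cases heq : b.leaves = (KH.expandV T t₀ wcos v).leaves
  · refine KH.below_iff.mpr (Or.inr ⟨heq, ?_⟩)
    rw [hblab, KH.expandV_label, hvlab]
    exact hHK
  · exact KH.below_iff.mpr (Or.inl (Finset.ssubset_iff_subset_ne.mpr ⟨hsub, heq⟩))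

theorem KH.not_expandV_below_B {K H : Subgroup G} (hHK : H < K) (ht₀T : t₀ ∈ T)
    {wcos : Fin N → Set G} {v b : FVertex N G} (hS : v.leaves ⊆ Tᶜ ∪ {t₀})
    (hvne : v.leaves.Nonempty) (hbT : b.leaves ⊆ T)
    (hblab : b.label = H) (hvlab : v.label = K) :
    ¬ (KH.expandV T t₀ wcos v).below b := by
  intro hbel
  have hsub : (KH.expandV T t₀ wcos v).leaves ⊆ b.leaves := KH.below_leaves_subset hbel
  by_cases ht : t₀ ∈ v.leaves
  · have h1 : (KH.expandV T t₀ wcos v).leaves = b.leaves := by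
      apply Finset.Subset.antisymm hsub
      rw [KH.expandV_leaves_pos ht]
      exact hbT.trans Finset.subset_union_right
    rcases KH.below_iff.mp hbel with hss | ⟨heq, hlt⟩
    · rw [h1] at hss
      exact (ssubset_irrefl _) hss
    · rw [KH.expandV_label, hvlab, hblab] at hlt
      exact absurd (hlt.trans hHK) (lt_irrefl K)
  · rw [KH.expandV_neg ht] at hsub
    obtain ⟨l, hl⟩ := hvne
    have hlT : l ∈ T := hbT (hsub hl)
    have := Finset.mem_singleton.mp (KH.leaves_inter_T hS
      (Finset.mem_inter.mpr ⟨hl, hlT⟩))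
    exact ht (this ▸ hl)

theorem KH.not_B_below_expandV_id (ht₀T : t₀ ∈ T) {wcos : Fin N → Set G}
    {v b : FVertex N G} (hS : v.leaves ⊆ Tᶜ ∪ {t₀}) (ht : t₀ ∉ v.leaves)
    (hbne : b.leaves.Nonempty) (hbT : b.leaves ⊆ T) :
    ¬ b.below (KH.expandV T t₀ wcos v) := by
  intro hbel
  rw [KH.expandV_neg ht] at hbel
  have hsub := KH.below_leaves_subset hbel
  obtain ⟨l, hl⟩ := hbne
  have := Finset.mem_singleton.mp (KH.leaves_inter_T hS
    (Finset.mem_inter.mpr ⟨hsub hl, hbT hl⟩))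
  exact ht (this ▸ hsub hl)

theorem KH.chain_coset (ρ : Representation ℂ G VV) {K H : Subgroup G}
    (hHK : H < K) (ht₀T : t₀ ∈ T) (hmin : ∀ l ∈ T, t₀ ≤ l)
    {F : Set (FVertex N G)} (hF : IsFGForest ρ F) {w : FVertex N G}
    (hw : w ∈ F) (hwlab : w.label = H) (hwl : w.leaves = T)
    (hwmax : ∀ u ∈ F, u.label = H → u = w ∨ u.below w)
    (hlabKH : ∀ u ∈ F, u.label = K ∨ u.label = H) :
    ∀ v ∈ F, v.label = K → T ⊆ v.leaves → ∀ l ∈ T,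
      v.coset l = w.coset l * v.coset t₀ := by
  obtain ⟨f1, f2, f3, f4, f5, f6, f7, f8, f9, f10, f11, f12, f13⟩ := id hF
  have hwne : w.leaves.Nonempty := ⟨t₀, hwl ▸ ht₀T⟩
  have hwminT : w.leaves.min' hwne = t₀ := by
    apply le_antisymm
    · exact Finset.min'_le _ _ (hwl ▸ ht₀T)
    · exact hmin _ (hwl ▸ w.leaves.min'_mem hwne)
  have hwt₀ : w.coset t₀ = (H : Set G) := by
    have := f13 w hw hwne
    rw [hwminT, hwlab] at this
    exact this
  have hwbelow : ∀ v ∈ F, v.label = K → T ⊆ v.leaves → w.below v := by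
    intro v hv hvlab hsub
    by_cases heq : w.leaves = v.leaves
    · refine KH.below_iff.mpr (Or.inr ⟨heq, ?_⟩)
      rw [hwlab, hvlab]
      exact hHK
    · exact KH.below_iff.mpr (Or.inl
        (Finset.ssubset_iff_subset_ne.mpr ⟨hwl ▸ hsub, heq⟩))
  have hwK : w.label ≠ K := by
    rw [hwlab]
    exact hHK.ne
  have key : ∀ k : ℕ, ∀ v ∈ F, v.label = K → T ⊆ v.leaves →
      ({u ∈ F | u.below v}).ncard ≤ k → ∀ l ∈ T,
      v.coset l = w.coset l * v.coset t₀ := by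
    intro k
    induction k with
    | zero =>
      intro v hv hvlab hsub hcard
      exfalso
      have hmem : w ∈ {u ∈ F | u.below v} := ⟨hw, hwbelow v hv hvlab hsub⟩
      have : 0 < ({u ∈ F | u.below v}).ncard :=
        (Set.ncard_pos (f1.subset (fun x hx => hx.1))).mpr ⟨w, hmem⟩
      omega
    | succ k ih =>
      intro v hv hvlab hsub hcard
      set betw := {u | u ∈ F ∧ u.below v ∧ T ⊆ u.leaves} with hbetw
      have hbfin : betw.Finite := f1.subset (fun x hx => hx.1)
      have hwb : w ∈ betw := ⟨hw, hwbelow v hv hvlab hsub, hwl ▸ Finset.Subset.refl _⟩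
      obtain ⟨r, ⟨⟨hrF, hrbv, hrT⟩, hrmax⟩, -⟩ := KH.exists_root_above hbfin w hwb
      have hdc : IsDirectChild F r v := by
        refine ⟨hrbv, ?_⟩
        rintro ⟨z, hz, hz1, hz2⟩
        exact hrmax z ⟨hz, hz2, hrT.trans (KH.below_leaves_subset hz1)⟩ hz1
      obtain ⟨a, -, ha2, -⟩ := f12 v hv r hrF hdc
      have ha2' : ∀ l ∈ r.leaves, v.coset l = r.coset l * a • (K : Set G) := by
        intro l hl
        have := ha2 l hl
        rwa [hvlab] at this
      have hat₀ : v.coset t₀ = r.coset t₀ * a • (K : Set G) := ha2' t₀ (hrT ht₀T)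
      by_cases hrw : r = w
      · subst hrw
        have h5 : v.coset t₀ = a • (K : Set G) := by
          rw [hat₀, hwt₀, KH.sub_coset_mul hHK.le]
        intro l hl
        rw [h5]
        exact ha2' l (hwl ▸ hl)
      · have hrlab : r.label = K := by
          rcases hlabKH r hrF with h | h
          · exact h
          · exfalso
            rcases hwmax r hrF h with h' | h'
            · exact hrw h'
            · have hsubr := KH.below_leaves_subset h'
              have heq : r.leaves = w.leaves :=
                Finset.Subset.antisymm hsubr (hwl ▸ hrT)
              rcases KH.below_iff.mp h' with hss | ⟨-, hlt⟩
              · exact (ssubset_irrefl _) (heq ▸ hss)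
              · rw [h, hwlab] at hlt
                exact absurd hlt (lt_irrefl H)
        have hss : {u ∈ F | u.below r} ⊂ {u ∈ F | u.below v} := by
          constructor
          · rintro x ⟨hx, hbx⟩
            exact ⟨hx, KH.below_trans hbx hrbv⟩
          · intro hsub'
            have : r ∈ {u ∈ F | u.below r} := hsub' ⟨hrF, hrbv⟩
            exact KH.below_irrefl r this.2
        have hlt : ({u ∈ F | u.below r}).ncard < ({u ∈ F | u.below v}).ncard :=
          Set.ncard_lt_ncard hss (f1.subset (fun x hx => hx.1))
        have hIH := ih r hrF hrlab hrT (by omega)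
        intro l hl
        rw [ha2' l (hrT hl), hIH l hl, mul_assoc, ← hat₀]
  intro v hv hvlab hsub
  exact key _ v hv hvlab hsub le_rfl
end KHChain
section KHPartB
variable {G : Type*} [CommGroup G] {VV : Type*} [AddCommGroup VV] [Module ℂ VV]
variable {N : ℕ} {T : Finset (Fin N)} {t₀ : Fin N}

theorem KH.K_leaves_cases (ρ : Representation ℂ G VV) {K H : Subgroup G} (hHK : H < K)
    {F : Set (FVertex N G)} (hF : IsFGForest ρ F) {w : FVertex N G}
    (hw : w ∈ F) (hwlab : w.label = H) (hwl : w.leaves = T)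
    (hwmax : ∀ u ∈ F, u.label = H → u = w ∨ u.below w) :
    ∀ v ∈ F, v.label = K → T ⊆ v.leaves ∨ Disjoint v.leaves T := by
  obtain ⟨f1, f2, f3, f4, f5, f6, f7, f8, f9, f10, f11, f12, f13⟩ := id hF
  intro v hv hvlab
  by_cases hint : (v.leaves ∩ w.leaves).Nonempty
  · rcases f5 v hv w hw hint with hsub | hsub
    · by_cases heq : v.leaves = w.leaves
      · exact Or.inl (heq ▸ hwl ▸ Finset.Subset.refl _)
      · exfalso
        have := f6 w hw v hv (Finset.ssubset_iff_subset_ne.mpr ⟨hsub, heq⟩)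
        rw [KH.conjLE_iff, hvlab, hwlab] at this
        exact absurd (hHK.trans_le this) (lt_irrefl H)
    · exact Or.inl (hwl ▸ hsub)
  · refine Or.inr (Finset.disjoint_left.mpr fun l hl hlT => ?_)
    exact hint ⟨l, Finset.mem_inter.mpr ⟨hl, hwl ▸ hlT⟩⟩

/-- Uniqueness of a vertex with given leaves among vertices of the same label. -/
theorem KH.unique_same_label_leaves (ρ : Representation ℂ G VV)
    {F : Set (FVertex N G)} (hF : IsFGForest ρ F) {b₁ b₂ : FVertex N G}
    (h₁ : b₁ ∈ F) (h₂ : b₂ ∈ F) (hlab : b₁.label = b₂.label)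
    (hleq : b₁.leaves = b₂.leaves) : b₁ = b₂ := by
  by_contra hne
  rcases hF.2.2.2.2.2.2.1 b₁ h₁ b₂ h₂ hne hleq with h | h
  · rw [KH.conjLT_iff, hlab] at h
    exact absurd h (lt_irrefl _)
  · rw [KH.conjLT_iff, hlab] at h
    exact absurd h (lt_irrefl _)

theorem KH.partB [Fintype G] (ρ : Representation ℂ G VV)
    (H K : Subgroup G) (hHK : H < K) (hKtop : K ≠ ⊤) (i j : ℕ)
    (hi : 0 < i) (hj : 0 < j) :
    Nat.card {F : Set (FVertex (i + j - 1) G) // IsFGForest ρ F ∧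
        (∃ v₁ ∈ F, rootsOf F = {v₁}) ∧ fallenLeaves F = ∅ ∧
        (∀ u ∈ F, u.label = K ∨ u.label = H) ∧ (∃ u ∈ F, u.label = K) ∧
        ∃ w ∈ F, w.label = H ∧ w.leaves.card = j ∧
          ∀ u ∈ F, u.label = H → (u = w ∨ u.below w)} =
      (i + j - 1).choose j * lamHT ρ K i * lamHT ρ H j := by
  classical
  have hcompl : ∀ (T : Finset (Fin (i + j - 1))), T.card = j → ∀ t₀ ∈ T,
      (Tᶜ ∪ {t₀}).card = i := by
    intro T hT t₀ ht₀
    rw [Finset.card_union_of_disjoint (Finset.disjoint_singleton_right.mpr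
      (by simp [ht₀])), Finset.card_compl, Fintype.card_fin, hT,
      Finset.card_singleton]
    omega
  set D := ({T : Finset (Fin (i + j - 1)) // T.card = j} ×
    {F₁ : Set (FVertex i G) // IsHTree ρ K F₁} ×
    {F₂ : Set (FVertex j G) // IsHTree ρ H F₂}) with hD
  have hTne : ∀ x : D, x.1.1.Nonempty :=
    fun x => Finset.card_pos.mp (by rw [x.1.2]; exact hj)
  let t₀f : (x : D) → Fin (i + j - 1) := fun x => x.1.1.min' (hTne x)
  have ht₀T : ∀ x : D, t₀f x ∈ x.1.1 := fun x => x.1.1.min'_mem (hTne x)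
  have hminf : ∀ x : D, ∀ l ∈ x.1.1, t₀f x ≤ l := fun x l hl => Finset.min'_le _ _ hl
  let eK : (x : D) → Fin i ↪o Fin (i + j - 1) := fun x =>
    (x.1.1ᶜ ∪ {t₀f x}).orderEmbOfFin (hcompl _ x.1.2 _ (ht₀T x))
  let eH : (x : D) → Fin j ↪o Fin (i + j - 1) := fun x => x.1.1.orderEmbOfFin x.1.2
  let A : (x : D) → Set (FVertex (i + j - 1) G) := fun x => KH.pushV (eK x) '' x.2.1.1
  let B : (x : D) → Set (FVertex (i + j - 1) G) := fun x => KH.pushV (eH x) '' x.2.2.1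
  let r₂f : (x : D) → FVertex j G := fun x => (x.2.2.2.2.2).choose
  have hr₂ : ∀ x : D, r₂f x ∈ x.2.2.1 ∧ (r₂f x).leaves = Finset.univ := by
    intro x
    obtain ⟨h1, h2⟩ := (x.2.2.2.2.2).choose_spec
    exact ⟨h1, h2⟩
  let wf : (x : D) → FVertex (i + j - 1) G := fun x => KH.pushV (eH x) (r₂f x)
  let r₁f : (x : D) → FVertex i G := fun x => (x.2.1.2.2.2).choose
  have hr₁ : ∀ x : D, r₁f x ∈ x.2.1.1 ∧ (r₁f x).leaves = Finset.univ := by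
    intro x
    obtain ⟨h1, h2⟩ := (x.2.1.2.2.2).choose_spec
    exact ⟨h1, h2⟩
  let Rf : (x : D) → FVertex (i + j - 1) G := fun x =>
    KH.expandV x.1.1 (t₀f x) (wf x).coset (KH.pushV (eK x) (r₁f x))
  let g : (x : D) → Set (FVertex (i + j - 1) G) := fun x =>
    KH.expandV x.1.1 (t₀f x) (wf x).coset '' A x ∪ B x
  -- range facts
  have hKrange : ∀ x : D, Finset.univ.map (eK x).toEmbedding = x.1.1ᶜ ∪ {t₀f x} :=
    fun x => KH.map_univ_orderEmbOfFin _ _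
  have hHrange : ∀ x : D, Finset.univ.map (eH x).toEmbedding = x.1.1 :=
    fun x => KH.map_univ_orderEmbOfFin _ _
  have hAleaves : ∀ x : D, ∀ u ∈ A x, u.leaves ⊆ x.1.1ᶜ ∪ {t₀f x} := by
    rintro x _ ⟨u, hu, rfl⟩
    rw [KH.pushV_leaves, ← hKrange x]
    exact Finset.map_subset_map.mpr (Finset.subset_univ _)
  have hBleaves : ∀ x : D, ∀ u ∈ B x, u.leaves ⊆ x.1.1 := by
    rintro x _ ⟨u, hu, rfl⟩
    rw [KH.pushV_leaves, ← hHrange x]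
    exact Finset.map_subset_map.mpr (Finset.subset_univ _)
  have hAlab : ∀ x : D, ∀ u ∈ A x, u.label = K := by
    rintro x _ ⟨u, hu, rfl⟩
    exact x.2.1.2.2.1 u hu
  have hBlab : ∀ x : D, ∀ u ∈ B x, u.label = H := by
    rintro x _ ⟨u, hu, rfl⟩
    exact x.2.2.2.2.1 u hu
  have hAforest : ∀ x : D, IsFGForest ρ (A x) :=
    fun x => (KH.isFGForest_push_iff ρ _ _).mpr x.2.1.2.1
  have hBforest : ∀ x : D, IsFGForest ρ (B x) :=
    fun x => (KH.isFGForest_push_iff ρ _ _).mpr x.2.2.2.1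
  have hwB : ∀ x : D, wf x ∈ B x := fun x => ⟨r₂f x, (hr₂ x).1, rfl⟩
  have hwleaves : ∀ x : D, (wf x).leaves = x.1.1 := by
    intro x
    rw [show (wf x).leaves = (r₂f x).leaves.map (eH x).toEmbedding from rfl,
      (hr₂ x).2, hHrange x]
  have hwlab : ∀ x : D, (wf x).label = H := fun x => hBlab x _ (hwB x)
  have hBroot : ∀ x : D, rootsOf (B x) = {wf x} := by
    intro x
    show rootsOf (KH.pushV (eH x) '' x.2.2.1) = {KH.pushV (eH x) (r₂f x)}
    rw [KH.rootsOf_push, KH.rootsOf_top x.2.2.2.2.1 x.2.2.2.1.2.2.2.2.2.2.1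
      (hr₂ x).1 (fun u _ => (hr₂ x).2 ▸ Finset.subset_univ _)]
    exact Set.image_singleton
  have hwroot : ∀ x : D, ∀ b ∈ B x, b = wf x ∨ b.below (wf x) := by
    intro x b hb
    obtain ⟨r, hr, hror⟩ := KH.exists_root_above (hBforest x).1 b hb
    rw [hBroot x] at hr
    rw [Set.mem_singleton_iff] at hr
    subst hr
    exact hror
  have hAroot : ∀ x : D, rootsOf (A x) = {KH.pushV (eK x) (r₁f x)} := by
    intro x
    show rootsOf (KH.pushV (eK x) '' x.2.1.1) = {KH.pushV (eK x) (r₁f x)}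
    rw [KH.rootsOf_push, KH.rootsOf_top x.2.1.2.2.1 x.2.1.2.1.2.2.2.2.2.2.1
      (hr₁ x).1 (fun u _ => (hr₁ x).2 ▸ Finset.subset_univ _)]
    exact Set.image_singleton
  have hAup : ∀ x : D, ∀ u ∈ A x, u = KH.pushV (eK x) (r₁f x) ∨
      u.below (KH.pushV (eK x) (r₁f x)) := by
    intro x u hu
    obtain ⟨r, hr, hror⟩ := KH.exists_root_above (hAforest x).1 u hu
    rw [hAroot x] at hr
    rw [Set.mem_singleton_iff] at hr
    subst hr
    exact hror
  have hpr₁A : ∀ x : D, KH.pushV (eK x) (r₁f x) ∈ A x := fun x => ⟨r₁f x, (hr₁ x).1, rfl⟩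
  have hpr₁leaves : ∀ x : D, (KH.pushV (eK x) (r₁f x)).leaves = x.1.1ᶜ ∪ {t₀f x} := by
    intro x
    rw [KH.pushV_leaves, (hr₁ x).2, hKrange x]
  have ht₀pr₁ : ∀ x : D, t₀f x ∈ (KH.pushV (eK x) (r₁f x)).leaves := by
    intro x
    rw [hpr₁leaves x]
    exact Finset.mem_union_right _ (Finset.mem_singleton_self _)
  have hglue : ∀ x : D, IsFGForest ρ (g x) := by
    intro x
    exact KH.glued_isFGForest ρ hHK hKtop (ht₀T x) (hminf x) (hAforest x)
      (hBforest x) (hAlab x) (hBlab x) (hAleaves x) (hBleaves x) (hwB x)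
      (hwleaves x) (hwroot x)
  have hRmem : ∀ x : D, Rf x ∈ g x := fun x => Or.inl ⟨_, hpr₁A x, rfl⟩
  have hRleaves : ∀ x : D, (Rf x).leaves = Finset.univ := by
    intro x
    show (KH.expandV x.1.1 (t₀f x) (wf x).coset (KH.pushV (eK x) (r₁f x))).leaves = _
    rw [KH.expandV_leaves_pos (ht₀pr₁ x), hpr₁leaves x]
    ext l
    simp only [Finset.mem_union, Finset.mem_compl, Finset.mem_singleton, Finset.mem_univ,
      iff_true]
    by_cases h : l ∈ x.1.1
    · exact Or.inr h
    · exact Or.inl (Or.inl h)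
  have hRlab : ∀ x : D, (Rf x).label = K := by
    intro x
    show (KH.expandV x.1.1 (t₀f x) (wf x).coset (KH.pushV (eK x) (r₁f x))).label = K
    rw [KH.expandV_label]
    exact hAlab x _ (hpr₁A x)
  have hall : ∀ x : D, ∀ u ∈ g x, u = Rf x ∨ u.below (Rf x) := by
    rintro x u (⟨v, hv, rfl⟩ | hu)
    · rcases hAup x v hv with h | h
      · exact Or.inl (by rw [h])
      · exact Or.inr ((KH.expandV_below_iff (ht₀T x) (hAleaves x v hv)
          (hAleaves x _ (hpr₁A x))).mpr h)
    · right
      have hwbR : (wf x).below (Rf x) :=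
        KH.B_below_expandV hHK (ht₀pr₁ x) ((hwleaves x) ▸ Finset.Subset.refl _)
          (hwlab x) (hAlab x _ (hpr₁A x))
      rcases hwroot x u hu with rfl | h
      · exact hwbR
      · exact KH.below_trans h hwbR
  have hRnotbelow : ∀ x : D, ∀ u ∈ g x, ¬ (Rf x).below u := by
    rintro x u (⟨v, hv, rfl⟩ | hu) hb
    · have := (KH.expandV_below_iff (ht₀T x) (hAleaves x _ (hpr₁A x))
        (hAleaves x v hv)).mp hb
      have hroot : KH.pushV (eK x) (r₁f x) ∈ rootsOf (A x) := by
        rw [hAroot x]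
        rfl
      exact hroot.2 v hv this
    · exact KH.not_expandV_below_B hHK (ht₀T x) (hAleaves x _ (hpr₁A x))
        ((hAforest x).2.2.1 _ (hpr₁A x)) (hBleaves x u hu) (hBlab x u hu)
        (hAlab x _ (hpr₁A x)) hb
  have hpred : ∀ x : D, IsFGForest ρ (g x) ∧
      (∃ v₁ ∈ g x, rootsOf (g x) = {v₁}) ∧ fallenLeaves (g x) = ∅ ∧
      (∀ u ∈ g x, u.label = K ∨ u.label = H) ∧ (∃ u ∈ g x, u.label = K) ∧
      ∃ w ∈ g x, w.label = H ∧ w.leaves.card = j ∧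
        ∀ u ∈ g x, u.label = H → (u = w ∨ u.below w) := by
    intro x
    refine ⟨hglue x, ⟨Rf x, hRmem x, ?_⟩, ?_, ?_, ⟨Rf x, hRmem x, hRlab x⟩,
      wf x, Or.inr (hwB x), hwlab x, by rw [hwleaves x]; exact x.1.2, ?_⟩
    · ext u
      simp only [rootsOf, Set.mem_setOf_eq, Set.mem_singleton_iff]
      constructor
      · rintro ⟨hu, hmax⟩
        rcases hall x u hu with h | h
        · exact h
        · exact absurd h (hmax _ (hRmem x))
      · rintro rfl
        exact ⟨hRmem x, hRnotbelow x⟩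
    · rw [KH.fallenLeaves_eq_empty_iff]
      intro l
      exact ⟨Rf x, hRmem x, (hRleaves x) ▸ Finset.mem_univ l⟩
    · rintro u (⟨v, hv, rfl⟩ | hu)
      · left
        rw [KH.expandV_label]
        exact hAlab x v hv
      · exact Or.inr (hBlab x u hu)
    · rintro u (⟨v, hv, rfl⟩ | hu) hlab
      · exfalso
        rw [KH.expandV_label, hAlab x v hv] at hlab
        exact hHK.ne hlab.symm
      · exact hwroot x u hu
  let f : D → {F : Set (FVertex (i + j - 1) G) // IsFGForest ρ F ∧
      (∃ v₁ ∈ F, rootsOf F = {v₁}) ∧ fallenLeaves F = ∅ ∧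
      (∀ u ∈ F, u.label = K ∨ u.label = H) ∧ (∃ u ∈ F, u.label = K) ∧
      ∃ w ∈ F, w.label = H ∧ w.leaves.card = j ∧
        ∀ u ∈ F, u.label = H → (u = w ∨ u.below w)} := fun x => ⟨g x, hpred x⟩
  have hgBdesc : ∀ x : D, B x = {u ∈ g x | u.label = H} := by
    intro x
    ext u
    constructor
    · intro hu
      exact ⟨Or.inr hu, hBlab x u hu⟩
    · rintro ⟨(⟨v, hv, rfl⟩ | hu), hlab⟩
      · exfalso
        rw [KH.expandV_label, hAlab x v hv] at hlab
        exact hHK.ne hlab.symm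
      · exact hu
  have hgTdesc : ∀ x : D, (x.1.1 : Set (Fin (i + j - 1))) =
      {l | ∃ u ∈ g x, u.label = H ∧ l ∈ u.leaves} := by
    intro x
    ext l
    simp only [Finset.mem_coe, Set.mem_setOf_eq]
    constructor
    · intro hl
      exact ⟨wf x, Or.inr (hwB x), hwlab x, (hwleaves x) ▸ hl⟩
    · rintro ⟨u, hu, hlab, hl⟩
      have huB : u ∈ B x := by
        have := hgBdesc x
        rw [this]
        exact ⟨hu, hlab⟩
      exact hBleaves x u huB hl
  have hwt₀ : ∀ x : D, (wf x).coset (t₀f x) = (H : Set G) := by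
    intro x
    obtain ⟨-, -, b3, -, -, -, -, -, -, -, -, -, b13⟩ := hBforest x
    have hwne : (wf x).leaves.Nonempty := b3 _ (hwB x)
    have hminw : (wf x).leaves.min' hwne = t₀f x := by
      apply le_antisymm
      · exact Finset.min'_le _ _ ((hwleaves x) ▸ ht₀T x)
      · exact hminf x _ ((hwleaves x) ▸ (wf x).leaves.min'_mem hwne)
    have h13 := b13 _ (hwB x) hwne
    rwa [hminw, hwlab x] at h13
  have hUE : ∀ x : D, ∀ v ∈ A x,
      KH.unexpandV x.1.1 (t₀f x) (KH.expandV x.1.1 (t₀f x) (wf x).coset v) = v := by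
    intro x v hv
    obtain ⟨-, -, -, -, -, -, -, -, -, a10, a11, -, -⟩ := hAforest x
    refine KH.unexpandV_expandV (ht₀T x) (hwt₀ x) hHK.le (hAleaves x v hv) ?_
      (a11 v hv)
    intro ht
    obtain ⟨a, ha⟩ := a10 v hv _ ht
    exact ⟨a, by rwa [hAlab x v hv] at ha⟩
  have hApart : ∀ x : D, KH.expandV x.1.1 (t₀f x) (wf x).coset '' A x =
      {u ∈ g x | u.label = K} := by
    intro x
    ext u
    constructor
    · rintro ⟨v, hv, rfl⟩
      refine ⟨Or.inl ⟨v, hv, rfl⟩, ?_⟩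
      rw [KH.expandV_label]
      exact hAlab x v hv
    · rintro ⟨(⟨v, hv, rfl⟩ | hu), hlab⟩
      · exact ⟨v, hv, rfl⟩
      · exfalso
        rw [hBlab x u hu] at hlab
        exact hHK.ne hlab
  have hinj : Function.Injective f := by
    intro x y hxy
    have hg : g x = g y := congrArg Subtype.val hxy
    have hT : x.1.1 = y.1.1 := by
      apply Finset.coe_injective
      rw [hgTdesc x, hgTdesc y, hg]
    obtain ⟨⟨Tx, hTx⟩, ⟨F₁x, hF₁x⟩, ⟨F₂x, hF₂x⟩⟩ := x
    obtain ⟨⟨Ty, hTy⟩, ⟨F₁y, hF₁y⟩, ⟨F₂y, hF₂y⟩⟩ := y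
    simp only at hT
    subst hT
    set X : D := (⟨Tx, hTx⟩, ⟨F₁x, hF₁x⟩, ⟨F₂x, hF₂x⟩) with hXdef
    set Y : D := (⟨Tx, hTy⟩, ⟨F₁y, hF₁y⟩, ⟨F₂y, hF₂y⟩) with hYdef
    have hgXY : g X = g Y := hg
    have hBeq : B X = B Y := by
      rw [hgBdesc X, hgBdesc Y, hgXY]
    have hF₂ : F₂x = F₂y :=
      Set.image_injective.mpr (KH.pushV_injective (eH X)) hBeq
    subst hF₂
    have hAeq : A X = A Y := by
      have h1 : KH.unexpandV Tx (t₀f X) ''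
          (KH.expandV Tx (t₀f X) (wf X).coset '' A X) = A X := by
        rw [← Set.image_comp]
        have hcongr : ∀ v ∈ A X, (KH.unexpandV Tx (t₀f X) ∘
            KH.expandV Tx (t₀f X) (wf X).coset) v = v := fun v hv => hUE X v hv
        rw [Set.image_congr hcongr, Set.image_id']
      have h2 : KH.unexpandV Tx (t₀f Y) ''
          (KH.expandV Tx (t₀f Y) (wf Y).coset '' A Y) = A Y := by
        rw [← Set.image_comp]
        have hcongr : ∀ v ∈ A Y, (KH.unexpandV Tx (t₀f Y) ∘
            KH.expandV Tx (t₀f Y) (wf Y).coset) v = v := fun v hv => hUE Y v hv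
        rw [Set.image_congr hcongr, Set.image_id']
      rw [← h1, ← h2, hApart X, hApart Y, hgXY]
    have hF₁ : F₁x = F₁y :=
      Set.image_injective.mpr (KH.pushV_injective (eK X)) hAeq
    subst hF₁
    rfl
  have hsurj : Function.Surjective f := by
    rintro ⟨F, hFor, ⟨v₁, hv₁, hroots⟩, hfall, hlabKH, hKne, w', hw', hwlab', hwcard', hwmax'⟩
    obtain ⟨f1, f2, f3, f4, f5, f6, f7, f8, f9, f10, f11, f12, f13⟩ := id hFor
    set T := w'.leaves with hTdef
    have hT : T.card = j := hwcard'
    have hTne' : T.Nonempty := Finset.card_pos.mp (by rw [hT]; exact hj)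
    set t₀ := T.min' hTne' with ht₀def
    have ht₀T' : t₀ ∈ T := T.min'_mem hTne'
    have hminT : ∀ l ∈ T, t₀ ≤ l := fun l hl => Finset.min'_le _ _ hl
    set Kp := {u | u ∈ F ∧ u.label = K} with hKpdef
    set Bp := {u | u ∈ F ∧ u.label = H} with hBpdef
    have hKT := KH.K_leaves_cases ρ hHK hFor hw' hwlab' rfl hwmax'
    have hFsplit : F = Kp ∪ Bp := by
      ext u
      constructor
      · intro hu
        rcases hlabKH u hu with h | h
        · exact Or.inl ⟨hu, h⟩
        · exact Or.inr ⟨hu, h⟩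
      · rintro (h | h)
        exacts [h.1, h.1]
    have huniv : ∀ u ∈ F, u = v₁ ∨ u.below v₁ := by
      intro u hu
      obtain ⟨r, hr, hror⟩ := KH.exists_root_above f1 u hu
      rw [hroots, Set.mem_singleton_iff] at hr
      subst hr
      exact hror
    have hv₁leaves : v₁.leaves = Finset.univ := by
      apply Finset.eq_univ_iff_forall.mpr
      intro l
      obtain ⟨u, hu, hlu⟩ := (KH.fallenLeaves_eq_empty_iff).mp hfall l
      rcases huniv u hu with rfl | hb
      · exact hlu
      · exact KH.below_leaves_subset hb hlu
    have hv₁lab : v₁.label = K := by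
      rcases hlabKH v₁ hv₁ with h | h
      · exact h
      · exfalso
        obtain ⟨uK, huK, huKlab⟩ := hKne
        have hne : uK ≠ v₁ := by
          intro hc
          rw [hc, h] at huKlab
          exact hHK.ne huKlab
        rcases huniv uK huK with hc | hb
        · exact hne hc
        · rcases KH.below_iff.mp hb with hss | ⟨-, hlt⟩
          · have := f6 v₁ hv₁ uK huK hss
            rw [KH.conjLE_iff, huKlab, h] at this
            exact absurd (hHK.trans_le this) (lt_irrefl H)
          · rw [huKlab, h] at hlt
            exact absurd (hHK.trans hlt) (lt_irrefl H)
    have hTv₁ : T ⊆ v₁.leaves := hv₁leaves ▸ Finset.subset_univ T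
    have hCL := KH.chain_coset ρ hHK ht₀T' hminT hFor hw' hwlab' rfl hwmax' hlabKH
    have hEU : ∀ v ∈ Kp, KH.expandV T t₀ w'.coset (KH.unexpandV T t₀ v) = v := by
      intro v hv
      exact KH.expandV_unexpandV ht₀T' (hKT v hv.1 hv.2) (fun hs => hCL v hv.1 hv.2 hs)
    have hA' : IsFGForest ρ (KH.unexpandV T t₀ '' Kp) :=
      KH.unglued_isFGForest ρ hHK hKtop ht₀T' hminT hFor hw' hwlab' rfl hwmax'
        hlabKH hKne
    have hBdc : ∀ u ∈ F, ∀ b ∈ Bp, u.below b → u ∈ Bp := by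
      intro u hu b hb hub
      rcases hlabKH u hu with h | h
      · exfalso
        have hbT : b.leaves ⊆ T := by
          rcases hwmax' b hb.1 hb.2 with rfl | hbw
          · exact Finset.Subset.refl _
          · exact KH.below_leaves_subset hbw
        have hsubu : u.leaves ⊆ T := (KH.below_leaves_subset hub).trans hbT
        rcases hKT u hu h with hTu | hdis
        · have heqb : u.leaves = b.leaves :=
            Finset.Subset.antisymm (KH.below_leaves_subset hub) (hbT.trans hTu)
          rcases KH.below_iff.mp hub with hss | ⟨-, hlt⟩
          · exact (ssubset_irrefl _) (heqb ▸ hss)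
          · rw [h, hb.2] at hlt
            exact absurd (hHK.trans hlt) (lt_irrefl H)
        · obtain ⟨l, hl⟩ := f3 u hu
          exact Finset.disjoint_left.mp hdis hl (hsubu hl)
      · exact ⟨hu, h⟩
    have hBfor : IsFGForest ρ Bp :=
      KH.isFGForest_subset ρ hFor (fun u hu => hu.1) ⟨w', hw', hwlab'⟩ hBdc
    set eK' := (Tᶜ ∪ {t₀}).orderEmbOfFin (hcompl T hT t₀ ht₀T') with heK'def
    set eH' := T.orderEmbOfFin hT with heH'def
    have hppA : KH.pushV eK' '' (KH.pullV eK' '' (KH.unexpandV T t₀ '' Kp)) =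
        KH.unexpandV T t₀ '' Kp := by
      rw [← Set.image_comp]
      have hcongr : ∀ u ∈ KH.unexpandV T t₀ '' Kp,
          (KH.pushV eK' ∘ KH.pullV eK') u = u := by
        rintro u hu
        apply KH.pushV_pullV
        · intro l hl
          obtain ⟨v, hv, rfl⟩ := hu
          have hl2 : l ∈ Tᶜ ∪ {t₀} :=
            KH.unexpandV_leaves_subset ht₀T' (hKT v hv.1 hv.2) hl
          have : l ∈ Set.range eK' := by
            rw [heK'def, Finset.range_orderEmbOfFin]
            exact hl2
          exact this
        · exact hA'.2.2.2.2.2.2.2.2.2.2.1 u hu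
      rw [Set.image_congr hcongr, Set.image_id']
    have hppB : KH.pushV eH' '' (KH.pullV eH' '' Bp) = Bp := by
      rw [← Set.image_comp]
      have hcongr : ∀ u ∈ Bp, (KH.pushV eH' ∘ KH.pullV eH') u = u := by
        intro u hu
        apply KH.pushV_pullV
        · intro l hl
          have hl2 : l ∈ T := by
            rcases hwmax' u hu.1 hu.2 with rfl | hbw
            · exact hl
            · exact KH.below_leaves_subset hbw hl
          have : l ∈ Set.range eH' := by
            rw [heH'def, Finset.range_orderEmbOfFin]
            exact hl2
          exact this
        · exact f11 u hu.1
      rw [Set.image_congr hcongr, Set.image_id']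
    have hT₁ : IsHTree ρ K (KH.pullV eK' '' (KH.unexpandV T t₀ '' Kp)) := by
      refine (KH.isHTree_push_iff ρ K eK' _ (Tᶜ ∪ {t₀})
        (KH.map_univ_orderEmbOfFin _ _)).mpr ?_
      rw [hppA]
      refine ⟨hA', ?_, KH.unexpandV T t₀ v₁, ⟨v₁, ⟨hv₁, hv₁lab⟩, rfl⟩, ?_⟩
      · rintro _ ⟨v, hv, rfl⟩
        rw [KH.unexpandV_label]
        exact hv.2
      · rw [KH.unexpandV_leaves_pos hTv₁, hv₁leaves, Finset.compl_eq_univ_sdiff]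
    have hT₂ : IsHTree ρ H (KH.pullV eH' '' Bp) := by
      refine (KH.isHTree_push_iff ρ H eH' _ T
        (KH.map_univ_orderEmbOfFin _ _)).mpr ?_
      rw [hppB]
      exact ⟨hBfor, fun u hu => hu.2, w', ⟨hw', hwlab'⟩, rfl⟩
    set x₀ : D := (⟨T, hT⟩, ⟨KH.pullV eK' '' (KH.unexpandV T t₀ '' Kp), hT₁⟩,
      ⟨KH.pullV eH' '' Bp, hT₂⟩) with hx₀def
    refine ⟨x₀, ?_⟩
    apply Subtype.ext
    show g x₀ = F
    have hgx₀ : g x₀ = KH.expandV T t₀ (wf x₀).coset ''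
        (KH.pushV eK' '' (KH.pullV eK' '' (KH.unexpandV T t₀ '' Kp))) ∪
        KH.pushV eH' '' (KH.pullV eH' '' Bp) := rfl
    have hwfBp : wf x₀ ∈ Bp := by
      have h := hwB x₀
      have hBx₀ : B x₀ = KH.pushV eH' '' (KH.pullV eH' '' Bp) := rfl
      rw [hBx₀, hppB] at h
      exact h
    have hwfeq : wf x₀ = w' := by
      apply KH.unique_same_label_leaves ρ hFor hwfBp.1 hw'
      · rw [hwfBp.2, hwlab']
      · exact hwleaves x₀
    have hEUcomp : ∀ v ∈ Kp, (KH.expandV T t₀ w'.coset ∘ KH.unexpandV T t₀) v = v :=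
      fun v hv => hEU v hv
    rw [hgx₀, hppA, hppB, hwfeq, ← Set.image_comp,
      Set.image_congr hEUcomp, Set.image_id', ← hFsplit]
  have hcard := Nat.card_eq_of_bijective f ⟨hinj, hsurj⟩
  rw [← hcard, hD, Nat.card_prod, Nat.card_prod, KH.card_subtype_finset_card,
    mul_assoc]
  rfl
end KHPartB
theorem count_KH_forests
    [Fintype G] [FiniteDimensional ℂ V] (ρ : Representation ℂ G V)
    (hfaith : Function.Injective ρ) (hfix : fixedSpace ρ ⊤ = ⊥)
    (H K : Subgroup G) (hH : IsClosedSubgroup ρ H) (hK : IsClosedSubgroup ρ K)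
    (hHK : H < K) (hKtop : K ≠ ⊤) (i j : ℕ) (hi : 0 < i) (hj : 0 < j) :
    -- (a) two components: a K-tree with i leaves and an H-tree with j leaves
    Nat.card {F : Set (FVertex (i + j) G) // IsFGForest ρ F ∧
        ∃ v₁ ∈ F, ∃ v₂ ∈ F, v₁ ≠ v₂ ∧ rootsOf F = {v₁, v₂} ∧
          fallenLeaves F = ∅ ∧
          (∀ u ∈ F, (u = v₁ ∨ u.below v₁) → u.label = K) ∧
          (∀ u ∈ F, (u = v₂ ∨ u.below v₂) → u.label = H) ∧
          v₁.leaves.card = i ∧ v₂.leaves.card = j} =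
      (i + j).choose i * lamHT ρ K i * lamHT ρ H j ∧
    -- (b) a single tree: the root of an H-tree with j leaves glued to a leaf of a
    -- K-tree with i leaves
    Nat.card {F : Set (FVertex (i + j - 1) G) // IsFGForest ρ F ∧
        (∃ v₁ ∈ F, rootsOf F = {v₁}) ∧ fallenLeaves F = ∅ ∧
        (∀ u ∈ F, u.label = K ∨ u.label = H) ∧ (∃ u ∈ F, u.label = K) ∧
        ∃ w ∈ F, w.label = H ∧ w.leaves.card = j ∧
          ∀ u ∈ F, u.label = H → (u = w ∨ u.below w)} =
      (i + j - 1).choose j * lamHT ρ K i * lamHT ρ H j := by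
  exact ⟨KH.partA ρ H K hHK hKtop i j hi, KH.partB ρ H K hHK hKtop i j hi hj⟩
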